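/- Let F be a Borel probability measure on the set of valuation profiles { v = (v_1,...,v_m) : v_i ∈ [0,1]^n, ∑_j v_{ij} ≤ 1 } with a density (with respect to Lebesgue measure) bounded above by X > 0, and let Y ≥ max{1, X}. For an AMA menu M = {(x^(k), β^(k))}_{k∈{0,...,K}}, define the softmax weights σ_k(v) = e^{Y W_k(v)} / ∑_{k'} e^{Y W_{k'}(v)} and, for each buyer i, σ_{-i,k}(v) = e^{Y(∑_{ℓ≠i} v_ℓ⋅x_ℓ^(k) + β^(k))} / ∑_{k'} e^{Y(∑_{ℓ≠i} v_ℓ⋅x_ℓ^(k') + β^(k'))}, and the softmax revenue Rev_softmax(M) := ∫ [ ∑_i ∑_k (∑_{ℓ≠i} v_ℓ⋅x_ℓ^(k) + β^(k)) σ_{-i,k}(v) − ∑_i ∑_k (∑_{ℓ≠i} v_ℓ⋅x_ℓ^(k) + β^(k)) σ_k(v) ] dF(v). Then |Rev_softmax(M) − Rev(M)| ≤ m(K+1)/(e·Y) + (n m X (K+1)/Y) · (1 + log(Y/X)). -/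

import Mathlib

open MeasureTheory Finset

namespace AMA

/-- An AMA menu: for each of the `K+1` option indices, an allocation
`x : Fin m → Fin n → ℝ` (buyer `i` receives `x i j` of item `j`) and a boost `β : ℝ`. -/
abbrev Menu (m n K : ℕ) := Fin (K + 1) → (Fin m → Fin n → ℝ) × ℝ

/-- Inner product of a valuation and an allocation. -/
def dotp {n : ℕ} (v x : Fin n → ℝ) : ℝ := ∑ j, v j * x j

/-- A valid AMA menu: entries in `[0,1]`, each item allocated at most once in total,
default option `(0, 0)`. -/
def IsMenu {m n K : ℕ} (M : Menu m n K) : Prop :=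
  (∀ k i j, 0 ≤ (M k).1 i j ∧ (M k).1 i j ≤ 1) ∧
  (∀ k j, ∑ i, (M k).1 i j ≤ 1) ∧ M 0 = 0

/-- The set of valuation profiles: each buyer's valuation lies in `[0,1]^n` with
coordinate sum at most `1`. -/
def VP (m n : ℕ) : Set (Fin m → Fin n → ℝ) :=
  {v | ∀ i, (∀ j, 0 ≤ v i j ∧ v i j ≤ 1) ∧ ∑ j, v i j ≤ 1}

/-- Boosted welfare of option `k` at the valuation profile `v`. -/
def bw {m n K : ℕ} (M : Menu m n K) (v : Fin m → Fin n → ℝ) (k : Fin (K + 1)) : ℝ :=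
  (∑ i, dotp (v i) ((M k).1 i)) + (M k).2

/-- Boosted welfare of option `k` at `v` when buyer `i` is omitted. -/
def bwWo {m n K : ℕ} (M : Menu m n K) (v : Fin m → Fin n → ℝ) (i : Fin m)
    (k : Fin (K + 1)) : ℝ :=
  (∑ l ∈ Finset.univ.erase i, dotp (v l) ((M k).1 l)) + (M k).2

/-- Maximal boosted welfare `W(v)`. -/
noncomputable def W {m n K : ℕ} (M : Menu m n K) (v : Fin m → Fin n → ℝ) : ℝ :=
  Finset.univ.sup' Finset.univ_nonempty (bw M v)

/-- Maximal boosted welfare `W(v₋ᵢ)` with buyer `i` omitted. -/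
noncomputable def WWo {m n K : ℕ} (M : Menu m n K) (v : Fin m → Fin n → ℝ)
    (i : Fin m) : ℝ :=
  Finset.univ.sup' Finset.univ_nonempty (bwWo M v i)

/-- The minimal boost among boosted-welfare-maximizing options (tie-breaking in favor
of maximal total payment). -/
noncomputable def minBeta {m n K : ℕ} (M : Menu m n K) (v : Fin m → Fin n → ℝ) : ℝ :=
  sInf {b : ℝ | ∃ k, bw M v k = W M v ∧ b = (M k).2}

/-- Total payment collected at `v`:
`∑ i W(v₋ᵢ) − (m−1) W(v) − min {β k : W_k(v) = W(v)}`. -/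
noncomputable def pay {m n K : ℕ} (M : Menu m n K) (v : Fin m → Fin n → ℝ) : ℝ :=
  (∑ i, WWo M v i) - ((m : ℝ) - 1) * W M v - minBeta M v

/-- Expected revenue of the AMA menu `M` under the profile distribution `F`. -/
noncomputable def Rev {m n K : ℕ} (F : Measure (Fin m → Fin n → ℝ))
    (M : Menu m n K) : ℝ :=
  ∫ v, pay M v ∂F

/-- Option-wise convex combination of two AMA menus. -/
noncomputable def comb {m n K : ℕ} (lam : ℝ) (M M' : Menu m n K) : Menu m n K :=
  fun k => (fun i j => lam * (M k).1 i j + (1 - lam) * (M' k).1 i j,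
            lam * (M k).2 + (1 - lam) * (M' k).2)

/-- The event that the option subset `K'` suffices at `v`: some boosted-welfare
maximizer with minimal boost lies in `K'`, and for every buyer `i` some maximizer of the
boosted welfare of `v₋ᵢ` lies in `K'`. -/
def GoodEvent {m n K : ℕ} (M : Menu m n K) (K' : Finset (Fin (K + 1)))
    (v : Fin m → Fin n → ℝ) : Prop :=
  (∃ k ∈ K', bw M v k = W M v ∧ (M k).2 = minBeta M v) ∧
  ∀ i : Fin m, ∃ k ∈ K', bwWo M v i k = WWo M v i

/-- `M` is `ε`-reducible: some subset `K'` of options containing the default option, of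
cardinality at most `√(K+1)`, whose good event has probability at least `1 - ε/m`. -/
def Reducible {m n K : ℕ} (F : Measure (Fin m → Fin n → ℝ)) (M : Menu m n K)
    (ε : ℝ) : Prop :=
  ∃ K' : Finset (Fin (K + 1)), 0 ∈ K' ∧ (K'.card : ℝ) ≤ Real.sqrt (K + 1) ∧
    (F {v | GoodEvent M K' v}).toReal ≥ 1 - ε / (m : ℝ)

/-- `M₁` and `M₂` are `ε`-mode-connected by a piecewise linear path with `pieces`
linear pieces, all whose menus are valid AMA menus and have revenue at least
`min (Rev M₁) (Rev M₂) - ε`. -/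
def PLConnected {m n K : ℕ} (F : Measure (Fin m → Fin n → ℝ)) (M₁ M₂ : Menu m n K)
    (ε : ℝ) (pieces : ℕ) : Prop :=
  ∃ P : Fin (pieces + 1) → Menu m n K, P 0 = M₁ ∧ P (Fin.last pieces) = M₂ ∧
    (∀ i, IsMenu (P i)) ∧
    ∀ i : Fin pieces, ∀ lam ∈ Set.Icc (0 : ℝ) 1,
      Rev F (comb lam (P i.castSucc) (P i.succ)) ≥ min (Rev F M₁) (Rev F M₂) - ε

/-- Softmax revenue of an AMA menu with inverse-temperature parameter `Y`:
`∫ [ ∑ i ∑ k bwWo(i,k) σ₋ᵢ,ₖ(v) − ∑ i ∑ k bwWo(i,k) σₖ(v) ] dF(v)`, where the weights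
`σₖ` (resp. `σ₋ᵢ,ₖ`) are the softmax weights of the boosted welfares `bw` (resp. the
boosted welfares `bwWo` with buyer `i` omitted). -/
noncomputable def RevSoftmax {m n K : ℕ} (F : Measure (Fin m → Fin n → ℝ)) (Y : ℝ)
    (M : Menu m n K) : ℝ :=
  ∫ v,
    ((∑ i, ∑ k, bwWo M v i k * Real.exp (Y * bwWo M v i k) /
        (∑ k', Real.exp (Y * bwWo M v i k'))) -
      (∑ i : Fin m, ∑ k, bwWo M v i k * Real.exp (Y * bw M v k) /
        (∑ k', Real.exp (Y * bw M v k')))) ∂F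

/-! ### Generic helpers -/

section Helpers

variable {α : Type*} [MeasurableSpace α]

lemma measurable_finset_sup' {ι : Type*} {s : Finset ι} (hs : s.Nonempty)
    (f : ι → α → ℝ) (hf : ∀ i, Measurable (f i)) :
    Measurable fun a => s.sup' hs fun i => f i a := by
  induction hs using Finset.Nonempty.cons_induction with
  | singleton i => simp only [Finset.sup'_singleton]; exact hf i
  | cons a s ha hs ih =>
      simp only [Finset.sup'_cons hs]
      exact (hf a).max ih

lemma measurable_finset_inf' {ι : Type*} {s : Finset ι} (hs : s.Nonempty)
    (f : ι → α → ℝ) (hf : ∀ i, Measurable (f i)) :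
    Measurable fun a => s.inf' hs fun i => f i a := by
  induction hs using Finset.Nonempty.cons_induction with
  | singleton i => simp only [Finset.inf'_singleton]; exact hf i
  | cons a s ha hs ih =>
      simp only [Finset.inf'_cons hs]
      exact (hf a).min ih

lemma continuous_finset_sup' {ι : Type*} {s : Finset ι} (hs : s.Nonempty)
    (f : ι → ℝ → ℝ) (hf : ∀ i, Continuous (f i)) :
    Continuous fun a => s.sup' hs fun i => f i a := by
  induction hs using Finset.Nonempty.cons_induction with
  | singleton i => simp only [Finset.sup'_singleton]; exact hf i
  | cons a s ha hs ih =>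
      simp only [Finset.sup'_cons hs]
      exact (hf a).max ih

lemma convexOn_finset_sup' {ι : Type*} {s : Finset ι} (hs : s.Nonempty)
    (f : ι → ℝ → ℝ) (hf : ∀ i, ConvexOn ℝ Set.univ (f i)) :
    ConvexOn ℝ Set.univ fun a => s.sup' hs fun i => f i a := by
  induction hs using Finset.Nonempty.cons_induction with
  | singleton i => simp only [Finset.sup'_singleton]; exact hf i
  | cons a s ha hs ih =>
      simp only [Finset.sup'_cons hs]
      exact (hf a).sup ih

lemma convexOn_affine (a b : ℝ) : ConvexOn ℝ Set.univ fun s : ℝ => a * s + b := by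
  refine ⟨convex_univ, fun x _ y _ p q hp hq hpq => ?_⟩
  simp only [smul_eq_mul]
  exact le_of_eq (by linear_combination (-b) * hpq)

lemma mul_exp_le_inv_mul (Y t : ℝ) (hY : 0 < Y) (ht : 0 ≤ t) :
    t * Real.exp (-(Y * t)) ≤ 1 / (Real.exp 1 * Y) := by
  have h2 : Y * t * Real.exp 1 ≤ Real.exp (Y * t) := by
    have h := Real.add_one_le_exp (Y * t - 1)
    have h' : Y * t ≤ Real.exp (Y * t - 1) := by linarith
    calc Y * t * Real.exp 1 ≤ Real.exp (Y * t - 1) * Real.exp 1 :=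
          mul_le_mul_of_nonneg_right h' (Real.exp_pos 1).le
      _ = Real.exp (Y * t) := by rw [← Real.exp_add]; ring_nf
  have hE : (0:ℝ) < Real.exp 1 := Real.exp_pos 1
  have hexp : (0:ℝ) < Real.exp (Y * t) := Real.exp_pos _
  rw [Real.exp_neg, ← div_eq_mul_inv, div_le_div_iff₀ hexp (by positivity)]
  nlinarith

/-- Key softmax bound: the softmax average of `c` is within `N/(e Y)` below the max. -/
lemma softmax_sum_bounds {N : ℕ} (Y : ℝ) (hY : 0 < Y) (c : Fin (N + 1) → ℝ) :
    -((N : ℝ) / (Real.exp 1 * Y)) ≤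
        (∑ k, (c k - Finset.univ.sup' Finset.univ_nonempty c) *
          (Real.exp (Y * c k) / ∑ k', Real.exp (Y * c k'))) ∧
      (∑ k, (c k - Finset.univ.sup' Finset.univ_nonempty c) *
          (Real.exp (Y * c k) / ∑ k', Real.exp (Y * c k'))) ≤ 0 := by
  set Cm := Finset.univ.sup' Finset.univ_nonempty c with hCm
  set D := ∑ k', Real.exp (Y * c k') with hD
  have hDpos : 0 < D := Finset.sum_pos (fun k _ => Real.exp_pos _) Finset.univ_nonempty
  have hle : ∀ k, c k ≤ Cm := fun k => Finset.le_sup' c (Finset.mem_univ k)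
  constructor
  · obtain ⟨k0, -, hk0⟩ := Finset.exists_mem_eq_sup' Finset.univ_nonempty c
    rw [← hCm] at hk0
    have hterm : ∀ k, -(1 / (Real.exp 1 * Y)) ≤ (c k - Cm) * (Real.exp (Y * c k) / D) := by
      intro k
      have ht : 0 ≤ Cm - c k := by linarith [hle k]
      have hkey : (Cm - c k) * Real.exp (Y * c k) ≤ (1 / (Real.exp 1 * Y)) * D := by
        have hexpand : Real.exp (Y * c k) = Real.exp (-(Y * (Cm - c k))) * Real.exp (Y * Cm) := by
          rw [← Real.exp_add]; ring_nf
        have h1 : (Cm - c k) * Real.exp (-(Y * (Cm - c k))) ≤ 1 / (Real.exp 1 * Y) :=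
          mul_exp_le_inv_mul Y _ hY ht
        have h2 : Real.exp (Y * Cm) ≤ D := by
          rw [hD, hk0]
          exact Finset.single_le_sum (f := fun k' => Real.exp (Y * c k'))
            (fun k _ => (Real.exp_pos _).le) (Finset.mem_univ k0)
        calc (Cm - c k) * Real.exp (Y * c k)
            = ((Cm - c k) * Real.exp (-(Y * (Cm - c k)))) * Real.exp (Y * Cm) := by
              rw [hexpand]; ring
          _ ≤ (1 / (Real.exp 1 * Y)) * Real.exp (Y * Cm) := by
              exact mul_le_mul_of_nonneg_right h1 (Real.exp_pos _).le
          _ ≤ (1 / (Real.exp 1 * Y)) * D := by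
              exact mul_le_mul_of_nonneg_left h2 (by positivity)
      have : (Cm - c k) * (Real.exp (Y * c k) / D) ≤ 1 / (Real.exp 1 * Y) := by
        rw [mul_div_assoc'] at *
        rw [div_le_iff₀ hDpos]
        exact hkey
      nlinarith
    calc -((N : ℝ) / (Real.exp 1 * Y))
        = (c k0 - Cm) * (Real.exp (Y * c k0) / D) +
            ∑ k ∈ Finset.univ.erase k0, (-(1 / (Real.exp 1 * Y))) := by
          rw [Finset.sum_const, Finset.card_erase_of_mem (Finset.mem_univ k0), Finset.card_univ,
            Fintype.card_fin, ← hk0, sub_self, zero_mul, zero_add]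
          simp only [Nat.add_sub_cancel, nsmul_eq_mul]
          push_cast
          ring
      _ ≤ (c k0 - Cm) * (Real.exp (Y * c k0) / D) +
            ∑ k ∈ Finset.univ.erase k0, (c k - Cm) * (Real.exp (Y * c k) / D) := by
          gcongr with k hk
          exact hterm k
      _ = ∑ k, (c k - Cm) * (Real.exp (Y * c k) / D) :=
          Finset.add_sum_erase _ (fun k => (c k - Cm) * (Real.exp (Y * c k) / D))
            (Finset.mem_univ k0)
  · refine Finset.sum_nonpos fun k _ => ?_
    have h1 : c k - Cm ≤ 0 := by linarith [hle k]
    have h2 : 0 ≤ Real.exp (Y * c k) / D := by positivity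
    exact mul_nonpos_of_nonpos_of_nonneg h1 h2

end Helpers
/-! ### Core definitions and the decomposition of the error -/

section Core

variable {m n K : ℕ}

/-- Welfare of option `k`. -/
def welf (M : Menu m n K) (v : Fin m → Fin n → ℝ) (k : Fin (K + 1)) : ℝ :=
  ∑ i, dotp (v i) ((M k).1 i)

lemma bw_eq_welf_add (M : Menu m n K) (v) (k) : bw M v k = welf M v k + (M k).2 := rfl

/-- The integrand of `RevSoftmax`. -/
noncomputable def intg (M : Menu m n K) (Y : ℝ) (v : Fin m → Fin n → ℝ) : ℝ :=
  (∑ i, ∑ k, bwWo M v i k * Real.exp (Y * bwWo M v i k) /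
      (∑ k', Real.exp (Y * bwWo M v i k'))) -
    (∑ i : Fin m, ∑ k, bwWo M v i k * Real.exp (Y * bw M v k) /
      (∑ k', Real.exp (Y * bw M v k')))

lemma revSoftmax_eq (F : Measure (Fin m → Fin n → ℝ)) (Y : ℝ) (M : Menu m n K) :
    RevSoftmax F Y M = ∫ v, intg M Y v ∂F := rfl

/-- The boosts of maximizing options, as a finite set. -/
noncomputable def FvSet (M : Menu m n K) (v : Fin m → Fin n → ℝ) : Finset ℝ :=
  (Finset.univ.filter fun k => bw M v k = W M v).image fun k => (M k).2

lemma FvSet_nonempty (M : Menu m n K) (v) : (FvSet M v).Nonempty := by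
  obtain ⟨k0, -, hk0⟩ := Finset.exists_mem_eq_sup' Finset.univ_nonempty (bw M v)
  exact ⟨(M k0).2, Finset.mem_image.2 ⟨k0, Finset.mem_filter.2 ⟨Finset.mem_univ _, hk0.symm⟩, rfl⟩⟩

lemma minBeta_set_eq (M : Menu m n K) (v) :
    {b : ℝ | ∃ k, bw M v k = W M v ∧ b = (M k).2} = ↑(FvSet M v) := by
  ext b
  simp only [FvSet, Finset.coe_image, Set.mem_image, Finset.mem_coe, Finset.mem_filter,
    Finset.mem_univ, true_and, Set.mem_setOf_eq]
  constructor
  · rintro ⟨k, hk, rfl⟩; exact ⟨k, hk, rfl⟩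
  · rintro ⟨k, hk, rfl⟩; exact ⟨k, hk, rfl⟩

lemma minBeta_mem (M : Menu m n K) (v) : minBeta M v ∈ FvSet M v := by
  have h := (FvSet_nonempty M v).csInf_mem
  rw [minBeta, minBeta_set_eq]
  exact h

lemma exists_kstar (M : Menu m n K) (v) :
    ∃ k, bw M v k = W M v ∧ (M k).2 = minBeta M v := by
  have h := minBeta_mem M v
  rw [FvSet, Finset.mem_image] at h
  obtain ⟨k, hk, hbk⟩ := h
  exact ⟨k, (Finset.mem_filter.1 hk).2, hbk⟩

/-- A canonical boosted-welfare maximizer with minimal boost. -/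
noncomputable def kstar (M : Menu m n K) (v : Fin m → Fin n → ℝ) : Fin (K + 1) :=
  (exists_kstar M v).choose

lemma kstar_spec (M : Menu m n K) (v) :
    bw M v (kstar M v) = W M v ∧ (M (kstar M v)).2 = minBeta M v :=
  (exists_kstar M v).choose_spec

/-- The three components of the pointwise error. -/
noncomputable def Aterm (M : Menu m n K) (Y : ℝ) (v : Fin m → Fin n → ℝ) : ℝ :=
  ∑ i, ∑ k, (bwWo M v i k - WWo M v i) *
    (Real.exp (Y * bwWo M v i k) / ∑ k', Real.exp (Y * bwWo M v i k'))

noncomputable def Tterm (M : Menu m n K) (Y : ℝ) (v : Fin m → Fin n → ℝ) : ℝ :=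
  ∑ k, (bw M v k - W M v) * (Real.exp (Y * bw M v k) / ∑ k', Real.exp (Y * bw M v k'))

noncomputable def Sterm (M : Menu m n K) (Y : ℝ) (v : Fin m → Fin n → ℝ) : ℝ :=
  welf M v (kstar M v) -
    ∑ k, welf M v k * (Real.exp (Y * bw M v k) / ∑ k', Real.exp (Y * bw M v k'))

lemma sum_softmax_weights (Y : ℝ) (c : Fin (K + 1) → ℝ) :
    ∑ k, Real.exp (Y * c k) / (∑ k', Real.exp (Y * c k')) = 1 := by
  have hD : (0:ℝ) < ∑ k', Real.exp (Y * c k') :=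
    Finset.sum_pos (fun k _ => Real.exp_pos _) Finset.univ_nonempty
  rw [← Finset.sum_div, div_self hD.ne']

lemma weighted_recentre (Y : ℝ) (c d : Fin (K + 1) → ℝ) (A : ℝ) :
    ∑ k, d k * Real.exp (Y * c k) / (∑ k', Real.exp (Y * c k'))
      = (∑ k, (d k - A) * (Real.exp (Y * c k) / ∑ k', Real.exp (Y * c k'))) + A := by
  calc ∑ k, d k * Real.exp (Y * c k) / (∑ k', Real.exp (Y * c k'))
      = ∑ k, ((d k - A) * (Real.exp (Y * c k) / ∑ k', Real.exp (Y * c k'))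
          + A * (Real.exp (Y * c k) / ∑ k', Real.exp (Y * c k'))) := by
        refine Finset.sum_congr rfl fun k _ => ?_
        rw [mul_div_assoc]; ring
    _ = (∑ k, (d k - A) * (Real.exp (Y * c k) / ∑ k', Real.exp (Y * c k')))
          + A * ∑ k, Real.exp (Y * c k) / (∑ k', Real.exp (Y * c k')) := by
        rw [Finset.sum_add_distrib, Finset.mul_sum]
    _ = _ := by rw [sum_softmax_weights, mul_one]

lemma sum_bwWo_eq (M : Menu m n K) (v) (k) :
    ∑ i, bwWo M v i k = ((m:ℝ) - 1) * welf M v k + (m:ℝ) * (M k).2 := by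
  unfold bwWo welf
  rw [Finset.sum_add_distrib, Finset.sum_const, Finset.card_univ, Fintype.card_fin]
  have h : ∀ i : Fin m, ∑ l ∈ Finset.univ.erase i, dotp (v l) ((M k).1 l)
      = (∑ l, dotp (v l) ((M k).1 l)) - dotp (v i) ((M k).1 i) := fun i =>
    Finset.sum_erase_eq_sub (Finset.mem_univ i)
  rw [Finset.sum_congr rfl fun i _ => h i, Finset.sum_sub_distrib, Finset.sum_const,
    Finset.card_univ, Fintype.card_fin]
  simp only [nsmul_eq_mul]
  push_cast
  ring

lemma err_eq (M : Menu m n K) (Y : ℝ) (v) :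
    intg M Y v - pay M v = Aterm M Y v - (m:ℝ) * Tterm M Y v - Sterm M Y v := by
  have h1 : (∑ i, ∑ k, bwWo M v i k * Real.exp (Y * bwWo M v i k) /
      (∑ k', Real.exp (Y * bwWo M v i k'))) = Aterm M Y v + ∑ i, WWo M v i := by
    unfold Aterm
    rw [← Finset.sum_add_distrib]
    exact Finset.sum_congr rfl fun i _ => weighted_recentre Y (bwWo M v i) (bwWo M v i) (WWo M v i)
  have h2 : (∑ i : Fin m, ∑ k, bwWo M v i k * Real.exp (Y * bw M v k) /
      (∑ k', Real.exp (Y * bw M v k')))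
      = ∑ k, (((m:ℝ) - 1) * welf M v k + (m:ℝ) * (M k).2) *
          (Real.exp (Y * bw M v k) / ∑ k', Real.exp (Y * bw M v k')) := by
    rw [Finset.sum_comm]
    refine Finset.sum_congr rfl fun k _ => ?_
    rw [← sum_bwWo_eq M v k, Finset.sum_mul]
    exact Finset.sum_congr rfl fun i _ => mul_div_assoc _ _ _
  have h2' : (∑ k, (((m:ℝ) - 1) * welf M v k + (m:ℝ) * (M k).2) *
        (Real.exp (Y * bw M v k) / ∑ k', Real.exp (Y * bw M v k')))
      = ((m:ℝ) - 1) * (∑ k, welf M v k *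
            (Real.exp (Y * bw M v k) / ∑ k', Real.exp (Y * bw M v k')))
        + (m:ℝ) * (∑ k, (M k).2 *
            (Real.exp (Y * bw M v k) / ∑ k', Real.exp (Y * bw M v k'))) := by
    rw [Finset.mul_sum, Finset.mul_sum, ← Finset.sum_add_distrib]
    refine Finset.sum_congr rfl fun k _ => ?_
    ring
  have hT : Tterm M Y v
      = (∑ k, welf M v k * (Real.exp (Y * bw M v k) / ∑ k', Real.exp (Y * bw M v k')))
        + (∑ k, (M k).2 * (Real.exp (Y * bw M v k) / ∑ k', Real.exp (Y * bw M v k')))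
        - W M v := by
    unfold Tterm
    have : ∀ k : Fin (K+1), (bw M v k - W M v) *
        (Real.exp (Y * bw M v k) / ∑ k', Real.exp (Y * bw M v k'))
        = welf M v k * (Real.exp (Y * bw M v k) / ∑ k', Real.exp (Y * bw M v k'))
          + (M k).2 * (Real.exp (Y * bw M v k) / ∑ k', Real.exp (Y * bw M v k'))
          - W M v * (Real.exp (Y * bw M v k) / ∑ k', Real.exp (Y * bw M v k')) := by
      intro k
      rw [bw_eq_welf_add M v k]
      ring
    rw [Finset.sum_congr rfl fun k _ => this k]
    rw [Finset.sum_sub_distrib, Finset.sum_add_distrib, ← Finset.mul_sum,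
      sum_softmax_weights, mul_one]
  have hW : W M v = welf M v (kstar M v) + (M (kstar M v)).2 := by
    rw [← (kstar_spec M v).1, bw_eq_welf_add]
  have hmb : minBeta M v = (M (kstar M v)).2 := ((kstar_spec M v).2).symm
  unfold intg pay Sterm
  rw [h1, h2, h2', hT, hmb, hW]
  ring

end Core
/-! ### Pointwise bounds -/

section Bounds

variable {m n K : ℕ}

lemma Aterm_nonpos (M : Menu m n K) {Y : ℝ} (hY : 0 < Y) (v) : Aterm M Y v ≤ 0 :=
  Finset.sum_nonpos fun i _ => (softmax_sum_bounds Y hY (bwWo M v i)).2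

lemma Aterm_ge (M : Menu m n K) {Y : ℝ} (hY : 0 < Y) (v) :
    -((m:ℝ) * K / (Real.exp 1 * Y)) ≤ Aterm M Y v := by
  have h : ∀ i : Fin m, -((K:ℝ) / (Real.exp 1 * Y)) ≤
      ∑ k, (bwWo M v i k - WWo M v i) *
        (Real.exp (Y * bwWo M v i k) / ∑ k', Real.exp (Y * bwWo M v i k')) := fun i =>
    (softmax_sum_bounds Y hY (bwWo M v i)).1
  calc -((m:ℝ) * K / (Real.exp 1 * Y))
      = ∑ _i : Fin m, -((K:ℝ) / (Real.exp 1 * Y)) := by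
        rw [Finset.sum_const, Finset.card_univ, Fintype.card_fin, nsmul_eq_mul]; ring
    _ ≤ Aterm M Y v := Finset.sum_le_sum fun i _ => h i

lemma Tterm_nonpos (M : Menu m n K) {Y : ℝ} (hY : 0 < Y) (v) : Tterm M Y v ≤ 0 :=
  (softmax_sum_bounds Y hY (bw M v)).2

lemma Tterm_ge (M : Menu m n K) {Y : ℝ} (hY : 0 < Y) (v) :
    -((K:ℝ) / (Real.exp 1 * Y)) ≤ Tterm M Y v :=
  (softmax_sum_bounds Y hY (bw M v)).1

lemma err_abs_le (M : Menu m n K) {Y : ℝ} (hY : 0 < Y) (hm : 0 < m) (v) :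
    |intg M Y v - pay M v| ≤ (m:ℝ) * K / (Real.exp 1 * Y) + |Sterm M Y v| := by
  rw [err_eq]
  have hA1 := Aterm_nonpos M hY v
  have hA2 := Aterm_ge M hY v
  have hT1 := Tterm_nonpos M hY v
  have hT2 := Tterm_ge M hY v
  have hm' : (1:ℝ) ≤ (m:ℝ) := by exact_mod_cast hm
  have hpos : (0:ℝ) ≤ (K:ℝ) / (Real.exp 1 * Y) := by positivity
  have hm0 : (0:ℝ) ≤ (m:ℝ) := by positivity
  have hmT1 : (m:ℝ) * Tterm M Y v ≤ 0 := mul_nonpos_of_nonneg_of_nonpos hm0 hT1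
  have hmT2 : -((m:ℝ) * (K:ℝ) / (Real.exp 1 * Y)) ≤ (m:ℝ) * Tterm M Y v := by
    have := mul_le_mul_of_nonneg_left hT2 hm0
    calc -((m:ℝ) * (K:ℝ) / (Real.exp 1 * Y)) = (m:ℝ) * -((K:ℝ) / (Real.exp 1 * Y)) := by ring
      _ ≤ (m:ℝ) * Tterm M Y v := this
  have habs : |Aterm M Y v - (m:ℝ) * Tterm M Y v| ≤ (m:ℝ) * K / (Real.exp 1 * Y) := by
    rw [abs_le]
    constructor
    · linarith
    · linarith
  calc |Aterm M Y v - (m:ℝ) * Tterm M Y v - Sterm M Y v|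
      ≤ |Aterm M Y v - (m:ℝ) * Tterm M Y v| + |Sterm M Y v| := by
        rw [sub_eq_add_neg]
        exact (abs_add_le _ _).trans (by rw [abs_neg])
    _ ≤ (m:ℝ) * K / (Real.exp 1 * Y) + |Sterm M Y v| := by linarith

/-! Facts on the valuation-profile set. -/

lemma welf_nonneg {M : Menu m n K} (hM : IsMenu M) {v} (hv : v ∈ VP m n) (k) :
    0 ≤ welf M v k := by
  refine Finset.sum_nonneg fun i _ => Finset.sum_nonneg fun j _ => ?_
  exact mul_nonneg ((hv i).1 j).1 (hM.1 k i j).1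

lemma welf_le_n {M : Menu m n K} (hM : IsMenu M) {v} (hv : v ∈ VP m n) (k) :
    welf M v k ≤ (n : ℝ) := by
  unfold welf dotp
  rw [Finset.sum_comm]
  calc ∑ j, ∑ i, v i j * (M k).1 i j
      ≤ ∑ j, ∑ i, (M k).1 i j := by
        refine Finset.sum_le_sum fun j _ => Finset.sum_le_sum fun i _ => ?_
        calc v i j * (M k).1 i j ≤ 1 * (M k).1 i j :=
              mul_le_mul_of_nonneg_right ((hv i).1 j).2 (hM.1 k i j).1
          _ = (M k).1 i j := one_mul _
    _ ≤ ∑ _j : Fin n, (1:ℝ) := Finset.sum_le_sum fun j _ => hM.2.1 k j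
    _ = (n : ℝ) := by rw [Finset.sum_const, Finset.card_univ, Fintype.card_fin, nsmul_eq_mul, mul_one]

lemma softmax_weight_le (M : Menu m n K) (Y : ℝ) (v) (k) :
    Real.exp (Y * bw M v k) / (∑ k', Real.exp (Y * bw M v k'))
      ≤ Real.exp (Y * (bw M v k - W M v)) := by
  obtain ⟨k0, -, hk0⟩ := Finset.exists_mem_eq_sup' (Finset.univ_nonempty) (bw M v)
  have hD : Real.exp (Y * W M v) ≤ ∑ k', Real.exp (Y * bw M v k') := by
    rw [show W M v = bw M v k0 from hk0]
    exact Finset.single_le_sum (f := fun k' => Real.exp (Y * bw M v k'))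
      (fun k _ => (Real.exp_pos _).le) (Finset.mem_univ k0)
  calc Real.exp (Y * bw M v k) / (∑ k', Real.exp (Y * bw M v k'))
      ≤ Real.exp (Y * bw M v k) / Real.exp (Y * W M v) :=
        div_le_div_of_nonneg_left (Real.exp_pos _).le (Real.exp_pos _) hD
    _ = Real.exp (Y * (bw M v k - W M v)) := by
        rw [← Real.exp_sub]; ring_nf

open scoped Classical in
/-- The dominating slice term for option `k` and coordinate `(i,j)`. -/
noncomputable def term (M : Menu m n K) (Y : ℝ) (k : Fin (K + 1)) (i : Fin m) (j : Fin n)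
    (v : Fin m → Fin n → ℝ) : ℝ :=
  Finset.univ.sup' Finset.univ_nonempty fun k' =>
    if bw M v k' = W M v then
      |(M k').1 i j - (M k).1 i j| * Real.exp (Y * (bw M v k - W M v))
    else 0

lemma term_nonneg (M : Menu m n K) (Y : ℝ) (k i j v) : 0 ≤ term M Y k i j v := by
  classical
  have h := Finset.le_sup' (fun k' =>
      if bw M v k' = W M v then
        |(M k').1 i j - (M k).1 i j| * Real.exp (Y * (bw M v k - W M v))
      else 0) (Finset.mem_univ (kstar M v))
  refine le_trans ?_ (le_trans h (le_of_eq ?_))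
  · rw [if_pos (kstar_spec M v).1]
    positivity
  · rfl

lemma Sterm_eq (M : Menu m n K) (Y : ℝ) (v) :
    Sterm M Y v = ∑ k, (welf M v (kstar M v) - welf M v k) *
      (Real.exp (Y * bw M v k) / ∑ k', Real.exp (Y * bw M v k')) := by
  have h := weighted_recentre Y (bw M v) (welf M v) (welf M v (kstar M v))
  unfold Sterm
  have h2 : ∑ k, welf M v k * (Real.exp (Y * bw M v k) / ∑ k', Real.exp (Y * bw M v k'))
      = ∑ k, welf M v k * Real.exp (Y * bw M v k) / (∑ k', Real.exp (Y * bw M v k')) :=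
    Finset.sum_congr rfl fun k _ => (mul_div_assoc _ _ _).symm
  rw [h2, h]
  have h3 : ∀ k : Fin (K+1), (welf M v k - welf M v (kstar M v)) *
        (Real.exp (Y * bw M v k) / ∑ k', Real.exp (Y * bw M v k'))
      = -((welf M v (kstar M v) - welf M v k) *
        (Real.exp (Y * bw M v k) / ∑ k', Real.exp (Y * bw M v k'))) := fun k => by ring
  rw [Finset.sum_congr rfl fun k _ => h3 k, Finset.sum_neg_distrib]
  ring

lemma Sterm_abs_le_n {M : Menu m n K} (hM : IsMenu M) (Y : ℝ) {v} (hv : v ∈ VP m n) :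
    |Sterm M Y v| ≤ (n : ℝ) := by
  rw [Sterm_eq]
  calc |∑ k, (welf M v (kstar M v) - welf M v k) *
        (Real.exp (Y * bw M v k) / ∑ k', Real.exp (Y * bw M v k'))|
      ≤ ∑ k, |(welf M v (kstar M v) - welf M v k) *
        (Real.exp (Y * bw M v k) / ∑ k', Real.exp (Y * bw M v k'))| :=
        Finset.abs_sum_le_sum_abs _ _
    _ ≤ ∑ k, (n:ℝ) * (Real.exp (Y * bw M v k) / ∑ k', Real.exp (Y * bw M v k')) := by
        refine Finset.sum_le_sum fun k _ => ?_
        rw [abs_mul]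
        have hw : |Real.exp (Y * bw M v k) / ∑ k', Real.exp (Y * bw M v k')|
            = Real.exp (Y * bw M v k) / ∑ k', Real.exp (Y * bw M v k') := by
          rw [abs_of_nonneg]
          positivity
        rw [hw]
        refine mul_le_mul_of_nonneg_right ?_ (by positivity)
        rw [abs_le]
        have h1 := welf_nonneg hM hv k
        have h2 := welf_le_n hM hv k
        have h3 := welf_nonneg hM hv (kstar M v)
        have h4 := welf_le_n hM hv (kstar M v)
        constructor <;> linarith
    _ = (n:ℝ) := by rw [← Finset.mul_sum, sum_softmax_weights, mul_one]

lemma welf_diff_abs_le {M : Menu m n K} {v} (hv : v ∈ VP m n) (k k' : Fin (K + 1)) :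
    |welf M v k' - welf M v k| ≤ ∑ i, ∑ j, |(M k').1 i j - (M k).1 i j| := by
  unfold welf dotp
  rw [← Finset.sum_sub_distrib]
  calc |∑ i, (∑ j, v i j * (M k').1 i j - ∑ j, v i j * (M k).1 i j)|
      ≤ ∑ i, |∑ j, v i j * (M k').1 i j - ∑ j, v i j * (M k).1 i j| :=
        Finset.abs_sum_le_sum_abs _ _
    _ ≤ ∑ i, ∑ j, |(M k').1 i j - (M k).1 i j| := by
        refine Finset.sum_le_sum fun i _ => ?_
        rw [← Finset.sum_sub_distrib]
        refine (Finset.abs_sum_le_sum_abs _ _).trans (Finset.sum_le_sum fun j _ => ?_)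
        have : v i j * (M k').1 i j - v i j * (M k).1 i j
            = v i j * ((M k').1 i j - (M k).1 i j) := by ring
        rw [this, abs_mul]
        calc |v i j| * |(M k').1 i j - (M k).1 i j|
            ≤ 1 * |(M k').1 i j - (M k).1 i j| := by
              refine mul_le_mul_of_nonneg_right ?_ (abs_nonneg _)
              rw [abs_of_nonneg ((hv i).1 j).1]
              exact ((hv i).1 j).2
          _ = _ := one_mul _

lemma Sterm_abs_le_term {M : Menu m n K} (hM : IsMenu M) (Y : ℝ) {v} (hv : v ∈ VP m n) :
    |Sterm M Y v| ≤ ∑ k, ∑ i, ∑ j, term M Y k i j v := by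
  classical
  rw [Sterm_eq]
  refine (Finset.abs_sum_le_sum_abs _ _).trans (Finset.sum_le_sum fun k _ => ?_)
  rw [abs_mul]
  have hw : |Real.exp (Y * bw M v k) / ∑ k', Real.exp (Y * bw M v k')|
      = Real.exp (Y * bw M v k) / ∑ k', Real.exp (Y * bw M v k') := by
    rw [abs_of_nonneg]; positivity
  rw [hw]
  calc |welf M v (kstar M v) - welf M v k| *
        (Real.exp (Y * bw M v k) / ∑ k', Real.exp (Y * bw M v k'))
      ≤ (∑ i, ∑ j, |(M (kstar M v)).1 i j - (M k).1 i j|) *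
          Real.exp (Y * (bw M v k - W M v)) := by
        refine mul_le_mul (welf_diff_abs_le hv k (kstar M v)) (softmax_weight_le M Y v k)
          (by positivity) ?_
        refine Finset.sum_nonneg fun i _ => Finset.sum_nonneg fun j _ => abs_nonneg _
    _ = ∑ i, ∑ j, |(M (kstar M v)).1 i j - (M k).1 i j| *
          Real.exp (Y * (bw M v k - W M v)) := by
        rw [Finset.sum_mul]
        exact Finset.sum_congr rfl fun i _ => Finset.sum_mul _ _ _
    _ ≤ ∑ i, ∑ j, term M Y k i j v := by
        refine Finset.sum_le_sum fun i _ => Finset.sum_le_sum fun j _ => ?_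
        have h := Finset.le_sup' (fun k' =>
            if bw M v k' = W M v then
              |(M k').1 i j - (M k).1 i j| * Real.exp (Y * (bw M v k - W M v))
            else 0) (Finset.mem_univ (kstar M v))
        refine le_trans (le_of_eq ?_) (h.trans (le_of_eq rfl))
        rw [if_pos (kstar_spec M v).1]

end Bounds
/-! ### Measurability and integrability -/

section Meas

variable {m n K : ℕ}

lemma measurable_coord (i : Fin m) (j : Fin n) :
    Measurable fun v : Fin m → Fin n → ℝ => v i j :=
  (measurable_pi_apply j).comp (measurable_pi_apply i)

lemma measurable_bw (M : Menu m n K) (k) : Measurable fun v => bw M v k := by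
  unfold bw dotp
  exact (Finset.measurable_sum _ fun i _ => Finset.measurable_sum _ fun j _ =>
    (measurable_coord i j).mul_const _).add_const _

lemma measurable_bwWo (M : Menu m n K) (i) (k) : Measurable fun v => bwWo M v i k := by
  unfold bwWo dotp
  exact (Finset.measurable_sum _ fun l _ => Finset.measurable_sum _ fun j _ =>
    (measurable_coord l j).mul_const _).add_const _

lemma measurable_W (M : Menu m n K) : Measurable (W M) :=
  measurable_finset_sup' Finset.univ_nonempty (fun k v => bw M v k) fun k => measurable_bw M k

lemma measurable_WWo (M : Menu m n K) (i) : Measurable fun v => WWo M v i :=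
  measurable_finset_sup' Finset.univ_nonempty (fun k v => bwWo M v i k) fun k =>
    measurable_bwWo M i k

/-- The largest boost. -/
noncomputable def BBmax (M : Menu m n K) : ℝ :=
  Finset.univ.sup' Finset.univ_nonempty fun k => |(M k).2|

lemma abs_beta_le_BBmax (M : Menu m n K) (k) : |(M k).2| ≤ BBmax M :=
  Finset.le_sup' (fun k => |(M k).2|) (Finset.mem_univ k)

lemma BBmax_nonneg (M : Menu m n K) : 0 ≤ BBmax M :=
  le_trans (abs_nonneg _) (abs_beta_le_BBmax M 0)

lemma minBeta_le {M : Menu m n K} {v} {k} (h : bw M v k = W M v) :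
    minBeta M v ≤ (M k).2 := by
  rw [minBeta, minBeta_set_eq]
  refine csInf_le (Finset.bddBelow _) ?_
  rw [Finset.mem_coe, FvSet, Finset.mem_image]
  exact ⟨k, Finset.mem_filter.2 ⟨Finset.mem_univ _, h⟩, rfl⟩

open scoped Classical in
lemma minBeta_eq_inf' (M : Menu m n K) (v) :
    minBeta M v = Finset.univ.inf' Finset.univ_nonempty
      (fun k => if bw M v k = W M v then (M k).2 else BBmax M + 1) := by
  obtain ⟨k0, hk0, hb0⟩ := exists_kstar M v
  apply le_antisymm
  · refine Finset.le_inf' _ _ fun k _ => ?_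
    by_cases h : bw M v k = W M v
    · rw [if_pos h]; exact minBeta_le h
    · rw [if_neg h]
      have h1 : minBeta M v ≤ BBmax M := by
        rw [← hb0]
        exact (le_abs_self _).trans (abs_beta_le_BBmax M k0)
      linarith
  · have h := Finset.inf'_le (fun k => if bw M v k = W M v then (M k).2 else BBmax M + 1)
      (Finset.mem_univ k0)
    rw [if_pos hk0] at h
    rw [← hb0]
    exact h

open scoped Classical in
lemma measurable_minBeta (M : Menu m n K) : Measurable (minBeta M) := by
  have : minBeta M = fun v => Finset.univ.inf' Finset.univ_nonempty
      (fun k => if bw M v k = W M v then (M k).2 else BBmax M + 1) :=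
    funext fun v => minBeta_eq_inf' M v
  rw [this]
  refine measurable_finset_inf' Finset.univ_nonempty
    (fun k v => if bw M v k = W M v then (M k).2 else BBmax M + 1) fun k => ?_
  exact Measurable.ite (measurableSet_eq_fun (measurable_bw M k) (measurable_W M))
    measurable_const measurable_const

lemma measurable_pay (M : Menu m n K) : Measurable (pay M) := by
  unfold pay
  exact ((Finset.measurable_sum _ fun i _ => measurable_WWo M i).sub
    ((measurable_W M).const_mul _)).sub (measurable_minBeta M)

lemma measurable_intg (M : Menu m n K) (Y : ℝ) : Measurable (intg M Y) := by
  unfold intg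
  refine Measurable.sub ?_ ?_
  · refine Finset.measurable_sum _ fun i _ => Finset.measurable_sum _ fun k _ => ?_
    exact ((measurable_bwWo M i k).mul ((measurable_bwWo M i k).const_mul Y).exp).div
      (Finset.measurable_sum _ fun k' _ => ((measurable_bwWo M i k').const_mul Y).exp)
  · refine Finset.measurable_sum _ fun i _ => Finset.measurable_sum _ fun k _ => ?_
    exact ((measurable_bwWo M i k).mul ((measurable_bw M k).const_mul Y).exp).div
      (Finset.measurable_sum _ fun k' _ => ((measurable_bw M k').const_mul Y).exp)

open scoped Classical in
lemma measurable_term (M : Menu m n K) (Y : ℝ) (k i j) :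
    Measurable (term M Y k i j) := by
  unfold term
  refine measurable_finset_sup' Finset.univ_nonempty
    (fun k' v => if bw M v k' = W M v then
      |(M k').1 i j - (M k).1 i j| * Real.exp (Y * (bw M v k - W M v)) else 0) fun k' => ?_
  refine Measurable.ite (measurableSet_eq_fun (measurable_bw M k') (measurable_W M)) ?_
    measurable_const
  exact (((measurable_bw M k).sub (measurable_W M)).const_mul Y).exp.const_mul _

lemma measurableSet_VP : MeasurableSet (VP m n) := by
  have : VP m n = ⋂ i : Fin m, ((⋂ j : Fin n, {v : Fin m → Fin n → ℝ | 0 ≤ v i j ∧ v i j ≤ 1})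
      ∩ {v : Fin m → Fin n → ℝ | ∑ j, v i j ≤ 1}) := by
    ext v
    simp only [VP, Set.mem_setOf_eq, Set.mem_iInter, Set.mem_inter_iff]
  rw [this]
  refine MeasurableSet.iInter fun i => MeasurableSet.inter ?_ ?_
  · refine MeasurableSet.iInter fun j => ?_
    have h1 : MeasurableSet {v : Fin m → Fin n → ℝ | 0 ≤ v i j} :=
      measurableSet_le measurable_const (measurable_coord i j)
    have h2 : MeasurableSet {v : Fin m → Fin n → ℝ | v i j ≤ 1} :=
      measurableSet_le (measurable_coord i j) measurable_const
    exact h1.inter h2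
  · exact measurableSet_le (Finset.measurable_sum _ fun j _ => measurable_coord i j)
      measurable_const

/-! ### Boundedness on `VP` and integrability -/

lemma dotp_abs_le {v x : Fin n → ℝ} (hv : ∀ j, 0 ≤ v j ∧ v j ≤ 1)
    (hx : ∀ j, 0 ≤ x j ∧ x j ≤ 1) : 0 ≤ dotp v x ∧ dotp v x ≤ (n:ℝ) := by
  constructor
  · exact Finset.sum_nonneg fun j _ => mul_nonneg (hv j).1 (hx j).1
  · calc ∑ j, v j * x j ≤ ∑ _j : Fin n, (1:ℝ) := by
          refine Finset.sum_le_sum fun j _ => ?_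
          calc v j * x j ≤ 1 * 1 := by
                exact mul_le_mul (hv j).2 (hx j).2 (hx j).1 zero_le_one
            _ = 1 := by ring
      _ = (n:ℝ) := by rw [Finset.sum_const, Finset.card_univ, Fintype.card_fin, nsmul_eq_mul, mul_one]

lemma bw_abs_le {M : Menu m n K} (hM : IsMenu M) {v} (hv : v ∈ VP m n) (k) :
    |bw M v k| ≤ (m:ℝ) * n + BBmax M := by
  have hd : ∀ i : Fin m, 0 ≤ dotp (v i) ((M k).1 i) ∧ dotp (v i) ((M k).1 i) ≤ (n:ℝ) :=
    fun i => dotp_abs_le (hv i).1 (fun j => hM.1 k i j)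
  have h1 : 0 ≤ ∑ i, dotp (v i) ((M k).1 i) := Finset.sum_nonneg fun i _ => (hd i).1
  have h2 : ∑ i, dotp (v i) ((M k).1 i) ≤ (m:ℝ) * n := by
    calc ∑ i, dotp (v i) ((M k).1 i) ≤ ∑ _i : Fin m, (n:ℝ) :=
          Finset.sum_le_sum fun i _ => (hd i).2
      _ = (m:ℝ) * n := by rw [Finset.sum_const, Finset.card_univ, Fintype.card_fin, nsmul_eq_mul]
  have h3 : |(M k).2| ≤ BBmax M := abs_beta_le_BBmax M k
  rw [bw_eq_welf_add, abs_le]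
  unfold welf
  constructor
  · nlinarith [neg_abs_le ((M k).2)]
  · nlinarith [le_abs_self ((M k).2)]

lemma bwWo_abs_le {M : Menu m n K} (hM : IsMenu M) {v} (hv : v ∈ VP m n) (i k) :
    |bwWo M v i k| ≤ (m:ℝ) * n + BBmax M := by
  have hd : ∀ l : Fin m, 0 ≤ dotp (v l) ((M k).1 l) ∧ dotp (v l) ((M k).1 l) ≤ (n:ℝ) :=
    fun l => dotp_abs_le (hv l).1 (fun j => hM.1 k l j)
  have h1 : 0 ≤ ∑ l ∈ Finset.univ.erase i, dotp (v l) ((M k).1 l) :=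
    Finset.sum_nonneg fun l _ => (hd l).1
  have h2 : ∑ l ∈ Finset.univ.erase i, dotp (v l) ((M k).1 l) ≤ (m:ℝ) * n := by
    calc ∑ l ∈ Finset.univ.erase i, dotp (v l) ((M k).1 l)
        ≤ ∑ l, dotp (v l) ((M k).1 l) :=
          Finset.sum_le_sum_of_subset_of_nonneg (Finset.erase_subset _ _)
            (fun l _ _ => (hd l).1)
      _ ≤ ∑ _l : Fin m, (n:ℝ) := Finset.sum_le_sum fun l _ => (hd l).2
      _ = (m:ℝ) * n := by rw [Finset.sum_const, Finset.card_univ, Fintype.card_fin, nsmul_eq_mul]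
  have h3 : |(M k).2| ≤ BBmax M := abs_beta_le_BBmax M k
  unfold bwWo
  rw [abs_le]
  constructor
  · nlinarith [neg_abs_le ((M k).2)]
  · nlinarith [le_abs_self ((M k).2)]

lemma sup'_abs_le {c : Fin (K+1) → ℝ} {C : ℝ} (h : ∀ k, |c k| ≤ C) :
    |Finset.univ.sup' Finset.univ_nonempty c| ≤ C := by
  rw [abs_le]
  constructor
  · obtain ⟨k0, -, hk0⟩ := Finset.exists_mem_eq_sup' (Finset.univ_nonempty) c
    rw [hk0]
    linarith [(abs_le.1 (h k0)).1]
  · refine Finset.sup'_le _ _ fun k _ => ?_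
    linarith [(abs_le.1 (h k)).2]

lemma W_abs_le {M : Menu m n K} (hM : IsMenu M) {v} (hv : v ∈ VP m n) :
    |W M v| ≤ (m:ℝ) * n + BBmax M :=
  sup'_abs_le fun k => bw_abs_le hM hv k

lemma WWo_abs_le {M : Menu m n K} (hM : IsMenu M) {v} (hv : v ∈ VP m n) (i) :
    |WWo M v i| ≤ (m:ℝ) * n + BBmax M :=
  sup'_abs_le fun k => bwWo_abs_le hM hv i k

lemma minBeta_abs_le {M : Menu m n K} (hM : IsMenu M) {v} (hv : v ∈ VP m n) :
    |minBeta M v| ≤ (m:ℝ) * n + BBmax M := by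
  obtain ⟨k0, hk0, hb0⟩ := exists_kstar M v
  rw [← hb0]
  have h3 : |(M k0).2| ≤ BBmax M := abs_beta_le_BBmax M k0
  have hmn : (0:ℝ) ≤ (m:ℝ) * n := by positivity
  linarith

/-- A bound for the pay and softmax integrands on `VP`. -/
noncomputable def CC (M : Menu m n K) : ℝ := (m:ℝ) * n + BBmax M

lemma CC_nonneg (M : Menu m n K) : 0 ≤ CC M := by
  unfold CC
  have h1 := BBmax_nonneg M
  have h2 : (0:ℝ) ≤ (m:ℝ) * n := by positivity
  linarith

lemma pay_abs_le {M : Menu m n K} (hM : IsMenu M) (hm : 0 < m) {v} (hv : v ∈ VP m n) :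
    |pay M v| ≤ (2 * m + 2) * CC M := by
  unfold pay
  have h1 : |∑ i, WWo M v i| ≤ (m:ℝ) * CC M := by
    refine (Finset.abs_sum_le_sum_abs _ _).trans ?_
    calc ∑ i, |WWo M v i| ≤ ∑ _i : Fin m, CC M :=
          Finset.sum_le_sum fun i _ => WWo_abs_le hM hv i
      _ = (m:ℝ) * CC M := by rw [Finset.sum_const, Finset.card_univ, Fintype.card_fin, nsmul_eq_mul]
  have h2 : |((m:ℝ) - 1) * W M v| ≤ (m:ℝ) * CC M := by
    rw [abs_mul]
    have hm' : (1:ℝ) ≤ (m:ℝ) := by exact_mod_cast hm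
    have : |(m:ℝ) - 1| = (m:ℝ) - 1 := abs_of_nonneg (by linarith)
    rw [this]
    have hW : |W M v| ≤ CC M := W_abs_le hM hv
    have hC := CC_nonneg M
    nlinarith [abs_nonneg (W M v)]
  have h3 := minBeta_abs_le hM hv
  have hC := CC_nonneg M
  calc |∑ i, WWo M v i - ((m:ℝ) - 1) * W M v - minBeta M v|
      ≤ |∑ i, WWo M v i| + |((m:ℝ) - 1) * W M v| + |minBeta M v| := by
        refine (abs_sub _ _).trans ?_
        gcongr
        exact abs_sub _ _
    _ ≤ (2 * m + 2) * CC M := by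
        have : |minBeta M v| ≤ CC M := h3
        nlinarith

lemma abs_softsum_le {C : ℝ} (Y : ℝ) (c d : Fin (K + 1) → ℝ) (hd : ∀ k, |d k| ≤ C) :
    |∑ k, d k * Real.exp (Y * c k) / (∑ k', Real.exp (Y * c k'))| ≤ C := by
  have hC : 0 ≤ C := le_trans (abs_nonneg _) (hd 0)
  refine (Finset.abs_sum_le_sum_abs _ _).trans ?_
  calc ∑ k, |d k * Real.exp (Y * c k) / (∑ k', Real.exp (Y * c k'))|
      ≤ ∑ k, C * (Real.exp (Y * c k) / (∑ k', Real.exp (Y * c k'))) := by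
        refine Finset.sum_le_sum fun k _ => ?_
        rw [mul_div_assoc, abs_mul]
        have hw : |Real.exp (Y * c k) / ∑ k', Real.exp (Y * c k')|
            = Real.exp (Y * c k) / ∑ k', Real.exp (Y * c k') := by
          rw [abs_of_nonneg]
          have : (0:ℝ) < ∑ k', Real.exp (Y * c k') :=
            Finset.sum_pos (fun k _ => Real.exp_pos _) Finset.univ_nonempty
          positivity
        rw [hw]
        exact mul_le_mul_of_nonneg_right (hd k) (by
          have : (0:ℝ) < ∑ k', Real.exp (Y * c k') :=
            Finset.sum_pos (fun k _ => Real.exp_pos _) Finset.univ_nonempty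
          positivity)
    _ = C := by rw [← Finset.mul_sum, sum_softmax_weights, mul_one]

lemma intg_abs_le {M : Menu m n K} (hM : IsMenu M) (Y : ℝ) {v} (hv : v ∈ VP m n) :
    |intg M Y v| ≤ 2 * m * CC M := by
  unfold intg
  have h1 : |∑ i, ∑ k, bwWo M v i k * Real.exp (Y * bwWo M v i k) /
      (∑ k', Real.exp (Y * bwWo M v i k'))| ≤ (m:ℝ) * CC M := by
    refine (Finset.abs_sum_le_sum_abs _ _).trans ?_
    calc ∑ i, |∑ k, bwWo M v i k * Real.exp (Y * bwWo M v i k) /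
          (∑ k', Real.exp (Y * bwWo M v i k'))|
        ≤ ∑ _i : Fin m, CC M := Finset.sum_le_sum fun i _ =>
            abs_softsum_le Y (bwWo M v i) (bwWo M v i) (fun k => bwWo_abs_le hM hv i k)
      _ = (m:ℝ) * CC M := by rw [Finset.sum_const, Finset.card_univ, Fintype.card_fin, nsmul_eq_mul]
  have h2 : |∑ i : Fin m, ∑ k, bwWo M v i k * Real.exp (Y * bw M v k) /
      (∑ k', Real.exp (Y * bw M v k'))| ≤ (m:ℝ) * CC M := by
    refine (Finset.abs_sum_le_sum_abs _ _).trans ?_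
    calc ∑ i : Fin m, |∑ k, bwWo M v i k * Real.exp (Y * bw M v k) /
          (∑ k', Real.exp (Y * bw M v k'))|
        ≤ ∑ _i : Fin m, CC M := Finset.sum_le_sum fun i _ =>
            abs_softsum_le Y (bw M v) (bwWo M v i) (fun k => bwWo_abs_le hM hv i k)
      _ = (m:ℝ) * CC M := by rw [Finset.sum_const, Finset.card_univ, Fintype.card_fin, nsmul_eq_mul]
  refine (abs_sub _ _).trans ?_
  calc |∑ i, ∑ k, bwWo M v i k * Real.exp (Y * bwWo M v i k) /
        (∑ k', Real.exp (Y * bwWo M v i k'))| +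
      |∑ i : Fin m, ∑ k, bwWo M v i k * Real.exp (Y * bw M v k) /
        (∑ k', Real.exp (Y * bw M v k'))|
      ≤ (m:ℝ) * CC M + (m:ℝ) * CC M := add_le_add h1 h2
    _ = 2 * m * CC M := by ring

end Meas
/-! ### The one-dimensional slice lemma -/

section Slice

variable {K : ℕ}

open scoped Classical

noncomputable def lineSup (a b : Fin (K + 1) → ℝ) (s : ℝ) : ℝ :=
  Finset.univ.sup' Finset.univ_nonempty fun k => a k * s + b k

noncomputable def lineU (a b : Fin (K + 1) → ℝ) (k₀ : Fin (K + 1)) (Y : ℝ) (s : ℝ) : ℝ :=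
  Real.exp (Y * ((a k₀ * s + b k₀) - lineSup a b s))

noncomputable def linePsi (a b : Fin (K + 1) → ℝ) (k₀ : Fin (K + 1)) (Y : ℝ) (s : ℝ) : ℝ :=
  Finset.univ.sup' Finset.univ_nonempty fun k =>
    if a k * s + b k = lineSup a b s then |a k - a k₀| * lineU a b k₀ Y s else 0

lemma le_lineSup (a b : Fin (K + 1) → ℝ) (k) (s : ℝ) : a k * s + b k ≤ lineSup a b s :=
  Finset.le_sup' (fun k => a k * s + b k) (Finset.mem_univ k)

lemma exists_active (a b : Fin (K + 1) → ℝ) (s : ℝ) :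
    ∃ k, lineSup a b s = a k * s + b k := by
  obtain ⟨k, -, hk⟩ := Finset.exists_mem_eq_sup' Finset.univ_nonempty fun k => a k * s + b k
  exact ⟨k, hk⟩

lemma lineU_pos (a b : Fin (K + 1) → ℝ) (k₀) (Y s : ℝ) : 0 < lineU a b k₀ Y s :=
  Real.exp_pos _

lemma lineU_le_one (a b : Fin (K + 1) → ℝ) (k₀) {Y : ℝ} (hY : 0 ≤ Y) (s : ℝ) :
    lineU a b k₀ Y s ≤ 1 := by
  rw [lineU, ← Real.exp_zero]
  apply Real.exp_le_exp.2
  have h := le_lineSup a b k₀ s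
  nlinarith

lemma continuous_lineSup (a b : Fin (K + 1) → ℝ) : Continuous (lineSup a b) :=
  continuous_finset_sup' Finset.univ_nonempty (fun k s => a k * s + b k) fun k =>
    (continuous_const.mul continuous_id).add continuous_const

lemma continuous_lineU (a b : Fin (K + 1) → ℝ) (k₀) (Y : ℝ) :
    Continuous (lineU a b k₀ Y) := by
  apply Real.continuous_exp.comp
  exact continuous_const.mul
    (((continuous_const.mul continuous_id).add continuous_const).sub (continuous_lineSup a b))

lemma measurable_linePsi (a b : Fin (K + 1) → ℝ) (k₀) (Y : ℝ) :
    Measurable (linePsi a b k₀ Y) := by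
  refine measurable_finset_sup' Finset.univ_nonempty
    (fun k s => if a k * s + b k = lineSup a b s then |a k - a k₀| * lineU a b k₀ Y s else 0)
    fun k => ?_
  refine Measurable.ite (measurableSet_eq_fun ?_ (continuous_lineSup a b).measurable) ?_
    measurable_const
  · exact ((continuous_const.mul continuous_id).add continuous_const).measurable
  · exact ((continuous_lineU a b k₀ Y).measurable).const_mul _

lemma linePsi_nonneg (a b : Fin (K + 1) → ℝ) (k₀) (Y s : ℝ) : 0 ≤ linePsi a b k₀ Y s := by
  have h := Finset.le_sup' (fun k =>
    if a k * s + b k = lineSup a b s then |a k - a k₀| * lineU a b k₀ Y s else 0)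
    (Finset.mem_univ k₀)
  refine le_trans ?_ h
  by_cases hc : a k₀ * s + b k₀ = lineSup a b s
  · rw [if_pos hc]
    exact mul_nonneg (abs_nonneg _) (lineU_pos a b k₀ Y s).le
  · rw [if_neg hc]

/-- Crossing points of non-parallel lines. -/
noncomputable def crossPts (a b : Fin (K + 1) → ℝ) : Finset ℝ :=
  ((Finset.univ : Finset (Fin (K + 1) × Fin (K + 1))).filter fun p => a p.1 ≠ a p.2).image
    fun p => (b p.2 - b p.1) / (a p.1 - a p.2)

lemma cross_mem {a b : Fin (K + 1) → ℝ} {k k' : Fin (K + 1)} {s : ℝ} (hne : a k ≠ a k')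
    (h : a k * s + b k = a k' * s + b k') : s ∈ crossPts a b := by
  refine Finset.mem_image.2 ⟨(k, k'), Finset.mem_filter.2 ⟨Finset.mem_univ _, hne⟩, ?_⟩
  have hd : a k - a k' ≠ 0 := sub_ne_zero.2 hne
  field_simp
  linarith

/-- Base case: on an interval free of crossing points, the integral telescopes exactly. -/
lemma slice_base {a b : Fin (K + 1) → ℝ} {k₀ : Fin (K + 1)} {Y : ℝ} (hY : 0 < Y) {α β : ℝ}
    (hαβ : α < β) (hcross : ∀ t ∈ crossPts a b, t ∉ Set.Ioo α β) :
    ∫⁻ s in Set.Ioc α β, ENNReal.ofReal (linePsi a b k₀ Y s)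
      ≤ ENNReal.ofReal (|lineU a b k₀ Y β - lineU a b k₀ Y α| / Y) := by
  set mid := (α + β) / 2 with hmid_def
  have hmid : mid ∈ Set.Ioo α β := by constructor <;> (rw [hmid_def]; linarith)
  obtain ⟨kh, hkh⟩ := exists_active a b mid
  -- all active lines on the interior coincide with line kh
  have same : ∀ k, ∀ s ∈ Set.Ioo α β, a k * s + b k = lineSup a b s →
      a k = a kh ∧ b k = b kh := by
    intro k s hs hact
    by_cases hak : a k = a kh
    · refine ⟨hak, ?_⟩
      by_contra hb
      rcases lt_or_gt_of_ne hb with hblt | hbgt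
      · have h1 : a kh * s + b kh ≤ lineSup a b s := le_lineSup a b kh s
        rw [← hact, hak] at h1
        linarith
      · have h2 : a k * mid + b k ≤ lineSup a b mid := le_lineSup a b k mid
        rw [hkh, hak] at h2
        linarith
    · exfalso
      have h1 : a kh * s + b kh ≤ a k * s + b k := by
        rw [hact]; exact le_lineSup a b kh s
      have h2 : a k * mid + b k ≤ a kh * mid + b kh := by
        have := le_lineSup a b k mid
        rw [hkh] at this; exact this
      set t0 := (b kh - b k) / (a k - a kh) with ht0
      have hd : a k - a kh ≠ 0 := sub_ne_zero.2 hak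
      have e1 : (a k - a kh) * t0 = b kh - b k := by
        rw [ht0]; field_simp
      have hzero : a k * t0 + b k = a kh * t0 + b kh := by nlinarith [e1]
      have ht0mem : t0 ∈ Set.Ioo α β := by
        obtain ⟨hs1, hs2⟩ := hs
        obtain ⟨hm1, hm2⟩ := hmid
        rcases lt_or_gt_of_ne hd with hneg | hpos
        · -- a k - a kh < 0 : s ≤ t0 ≤ mid
          have hts : s ≤ t0 := by nlinarith
          have htm : t0 ≤ mid := by nlinarith
          exact ⟨by linarith, by linarith⟩
        · -- a k - a kh > 0 : mid ≤ t0 ≤ s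
          have hts : t0 ≤ s := by nlinarith
          have htm : mid ≤ t0 := by nlinarith
          exact ⟨by linarith, by linarith⟩
      exact hcross t0 (cross_mem hak hzero) ht0mem
  have hsup_eq : ∀ s ∈ Set.Ioo α β, lineSup a b s = a kh * s + b kh := by
    intro s hs
    obtain ⟨ks, hks⟩ := exists_active a b s
    obtain ⟨ha, hb⟩ := same ks s hs hks.symm
    rw [hks, ha, hb]
  set d := a kh - a k₀ with hd_def
  set ee := b kh - b k₀ with hee_def
  set c := -(Y * d) with hc_def
  set c2 := -(Y * ee) with hc2_def
  have hu_eq : Set.EqOn (lineU a b k₀ Y) (fun s => Real.exp (c * s + c2)) (Set.Icc α β) := by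
    have hIoo : Set.EqOn (lineU a b k₀ Y) (fun s => Real.exp (c * s + c2)) (Set.Ioo α β) := by
      intro s hs
      rw [lineU, hsup_eq s hs]
      congr 1
      rw [hc_def, hc2_def, hd_def, hee_def]
      ring
    have := hIoo.closure (continuous_lineU a b k₀ Y)
      (Real.continuous_exp.comp ((continuous_const.mul continuous_id).add continuous_const))
    rwa [closure_Ioo hαβ.ne] at this
  have hpsi_eq : ∀ s ∈ Set.Ioo α β, linePsi a b k₀ Y s = |d| * lineU a b k₀ Y s := by
    intro s hs
    apply le_antisymm
    · refine Finset.sup'_le _ _ fun k _ => ?_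
      by_cases hact : a k * s + b k = lineSup a b s
      · rw [if_pos hact, (same k s hs hact).1, ← hd_def]
      · rw [if_neg hact]
        exact mul_nonneg (abs_nonneg _) (lineU_pos a b k₀ Y s).le
    · obtain ⟨ks, hks⟩ := exists_active a b s
      have h := Finset.le_sup' (fun k =>
        if a k * s + b k = lineSup a b s then |a k - a k₀| * lineU a b k₀ Y s else 0)
        (Finset.mem_univ ks)
      rw [if_pos hks.symm, (same ks s hs hks.symm).1, ← hd_def] at h
      exact h
  -- reduce Ioc to Ioo
  have hIoc : ∫⁻ s in Set.Ioc α β, ENNReal.ofReal (linePsi a b k₀ Y s)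
      = ∫⁻ s in Set.Ioo α β, ENNReal.ofReal (linePsi a b k₀ Y s) := by
    rw [← Set.Ioo_union_right hαβ,
      lintegral_union (measurableSet_singleton β) (by simp)]
    rw [setLIntegral_measure_zero _ _ (measure_singleton β), add_zero]
  rw [hIoc]
  have hcong : ∫⁻ s in Set.Ioo α β, ENNReal.ofReal (linePsi a b k₀ Y s)
      = ∫⁻ s in Set.Ioo α β, ENNReal.ofReal (|d| * Real.exp (c * s + c2)) := by
    refine setLIntegral_congr_fun measurableSet_Ioo (fun s hs => ?_)
    rw [hpsi_eq s hs, hu_eq (Set.Ioo_subset_Icc_self hs)]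
  rw [hcong]
  have hcontg : Continuous fun s : ℝ => |d| * Real.exp (c * s + c2) :=
    continuous_const.mul (Real.continuous_exp.comp
      ((continuous_const.mul continuous_id).add continuous_const))
  have hint : IntegrableOn (fun s : ℝ => |d| * Real.exp (c * s + c2)) (Set.Ioo α β) volume :=
    (hcontg.integrableOn_Icc).mono_set Set.Ioo_subset_Icc_self
  have hlint : ∫⁻ s in Set.Ioo α β, ENNReal.ofReal (|d| * Real.exp (c * s + c2))
      = ENNReal.ofReal (∫ s in Set.Ioo α β, |d| * Real.exp (c * s + c2)) :=
    (ofReal_integral_eq_lintegral_ofReal hint (ae_of_all _ fun s => by positivity)).symm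
  rw [hlint]
  apply ENNReal.ofReal_le_ofReal
  have hval : ∫ s in Set.Ioo α β, |d| * Real.exp (c * s + c2)
      = |Real.exp (c * β + c2) - Real.exp (c * α + c2)| / Y := by
    rw [← integral_Ioc_eq_integral_Ioo, ← intervalIntegral.integral_of_le hαβ.le]
    by_cases hd0 : d = 0
    · have hc0 : c = 0 := by rw [hc_def, hd0]; ring
      simp [hd0, hc0]
    · have hc : c ≠ 0 := by
        rw [hc_def]
        exact neg_ne_zero.2 (mul_ne_zero hY.ne' hd0)
      have hFTC : ∫ s in α..β, |d| * Real.exp (c * s + c2)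
          = (|d| / c) * Real.exp (c * β + c2) - (|d| / c) * Real.exp (c * α + c2) := by
        apply intervalIntegral.integral_eq_sub_of_hasDerivAt
          (f := fun s => (|d| / c) * Real.exp (c * s + c2))
        · intro s _
          have h1 : HasDerivAt (fun s : ℝ => c * s + c2) c s := by
            simpa using ((hasDerivAt_id s).const_mul c).add_const c2
          have h2 := h1.exp
          have h3 := h2.const_mul (|d| / c)
          refine h3.congr_deriv ?_
          rw [mul_comm (Real.exp _) c, ← mul_assoc, div_mul_cancel₀ _ hc]
        · exact hcontg.intervalIntegrable α β
      rw [hFTC]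
      rcases lt_or_gt_of_ne hd0 with hdneg | hdpos
      · -- d < 0, c > 0, exp increasing
        have hcpos : 0 < c := by rw [hc_def]; nlinarith
        have hle : Real.exp (c * α + c2) ≤ Real.exp (c * β + c2) := by
          apply Real.exp_le_exp.2; nlinarith
        rw [abs_of_neg hdneg, abs_of_nonneg (by linarith : (0:ℝ) ≤ _)]
        rw [hc_def]
        field_simp
      · -- d > 0, c < 0, exp decreasing
        have hcneg : c < 0 := by rw [hc_def]; nlinarith
        have hle : Real.exp (c * β + c2) ≤ Real.exp (c * α + c2) := by
          apply Real.exp_le_exp.2; nlinarith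
        rw [abs_of_pos hdpos, abs_of_nonpos (by linarith : _ ≤ (0:ℝ))]
        rw [hc_def]
        field_simp
        ring
  rw [hval]
  have huα : lineU a b k₀ Y α = Real.exp (c * α + c2) :=
    hu_eq (Set.left_mem_Icc.2 hαβ.le)
  have huβ : lineU a b k₀ Y β = Real.exp (c * β + c2) :=
    hu_eq (Set.right_mem_Icc.2 hαβ.le)
  rw [huα, huβ]

end Slice
/-! ### Induction over crossing points and the full slice bound -/

section Slice2

variable {K : ℕ}

open scoped Classical

lemma slice_piece {a b : Fin (K + 1) → ℝ} {k₀ : Fin (K + 1)} {Y : ℝ} (hY : 0 < Y) :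
    ∀ (N : ℕ) (α β : ℝ), α ≤ β →
      ((crossPts a b).filter fun t => t ∈ Set.Ioo α β).card ≤ N →
      (MonotoneOn (lineU a b k₀ Y) (Set.Icc α β) ∨
        AntitoneOn (lineU a b k₀ Y) (Set.Icc α β)) →
      ∫⁻ s in Set.Ioc α β, ENNReal.ofReal (linePsi a b k₀ Y s)
        ≤ ENNReal.ofReal (|lineU a b k₀ Y β - lineU a b k₀ Y α| / Y) := by
  have base : ∀ (α β : ℝ), α ≤ β →
      ((crossPts a b).filter fun t => t ∈ Set.Ioo α β).card = 0 →
      ∫⁻ s in Set.Ioc α β, ENNReal.ofReal (linePsi a b k₀ Y s)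
        ≤ ENNReal.ofReal (|lineU a b k₀ Y β - lineU a b k₀ Y α| / Y) := by
    intro α β hab hcard
    rcases eq_or_lt_of_le hab with rfl | hlt
    · simp [Set.Ioc_self]
    · have hempty : ∀ t ∈ crossPts a b, t ∉ Set.Ioo α β := by
        intro t ht hmem
        have hmem2 : t ∈ (crossPts a b).filter fun t => t ∈ Set.Ioo α β :=
          Finset.mem_filter.2 ⟨ht, hmem⟩
        have := Finset.card_pos.2 ⟨t, hmem2⟩
        omega
      exact slice_base hY hlt hempty
  intro N
  induction N with
  | zero =>
      intro α β hab hcard _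
      exact base α β hab (Nat.le_zero.1 hcard)
  | succ N ih =>
      intro α β hab hcard hmono
      by_cases h0 : ((crossPts a b).filter fun t => t ∈ Set.Ioo α β).card = 0
      · exact base α β hab h0
      obtain ⟨γ, hγ⟩ := Finset.card_pos.1 (Nat.pos_of_ne_zero h0)
      have hγf := Finset.mem_filter.1 hγ
      obtain ⟨hαγ, hγβ⟩ := hγf.2
      have hsplit : Set.Ioc α β = Set.Ioc α γ ∪ Set.Ioc γ β :=
        (Set.Ioc_union_Ioc_eq_Ioc hαγ.le hγβ.le).symm
      rw [hsplit, lintegral_union measurableSet_Ioc (Set.Ioc_disjoint_Ioc_of_le le_rfl)]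
      have hc1 : ((crossPts a b).filter fun t => t ∈ Set.Ioo α γ).card ≤ N := by
        have hsub : ((crossPts a b).filter fun t => t ∈ Set.Ioo α γ) ⊆
            (((crossPts a b).filter fun t => t ∈ Set.Ioo α β).erase γ) := by
          intro t ht
          have h1 := Finset.mem_filter.1 ht
          exact Finset.mem_erase.2 ⟨ne_of_lt h1.2.2,
            Finset.mem_filter.2 ⟨h1.1, ⟨h1.2.1, lt_trans h1.2.2 hγβ⟩⟩⟩
        calc ((crossPts a b).filter fun t => t ∈ Set.Ioo α γ).card
            ≤ (((crossPts a b).filter fun t => t ∈ Set.Ioo α β).erase γ).card :=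
              Finset.card_le_card hsub
          _ = ((crossPts a b).filter fun t => t ∈ Set.Ioo α β).card - 1 :=
              Finset.card_erase_of_mem hγ
          _ ≤ N := by omega
      have hc2 : ((crossPts a b).filter fun t => t ∈ Set.Ioo γ β).card ≤ N := by
        have hsub : ((crossPts a b).filter fun t => t ∈ Set.Ioo γ β) ⊆
            (((crossPts a b).filter fun t => t ∈ Set.Ioo α β).erase γ) := by
          intro t ht
          have h1 := Finset.mem_filter.1 ht
          exact Finset.mem_erase.2 ⟨(ne_of_lt h1.2.1).symm,
            Finset.mem_filter.2 ⟨h1.1, ⟨lt_trans hαγ h1.2.1, h1.2.2⟩⟩⟩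
        calc ((crossPts a b).filter fun t => t ∈ Set.Ioo γ β).card
            ≤ (((crossPts a b).filter fun t => t ∈ Set.Ioo α β).erase γ).card :=
              Finset.card_le_card hsub
          _ = ((crossPts a b).filter fun t => t ∈ Set.Ioo α β).card - 1 :=
              Finset.card_erase_of_mem hγ
          _ ≤ N := by omega
      have hm1 : MonotoneOn (lineU a b k₀ Y) (Set.Icc α γ) ∨
          AntitoneOn (lineU a b k₀ Y) (Set.Icc α γ) :=
        hmono.imp (fun h => h.mono (Set.Icc_subset_Icc le_rfl hγβ.le))
          (fun h => h.mono (Set.Icc_subset_Icc le_rfl hγβ.le))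
      have hm2 : MonotoneOn (lineU a b k₀ Y) (Set.Icc γ β) ∨
          AntitoneOn (lineU a b k₀ Y) (Set.Icc γ β) :=
        hmono.imp (fun h => h.mono (Set.Icc_subset_Icc hαγ.le le_rfl))
          (fun h => h.mono (Set.Icc_subset_Icc hαγ.le le_rfl))
      refine le_trans (add_le_add (ih α γ hαγ.le hc1 hm1) (ih γ β hγβ.le hc2 hm2)) ?_
      rw [← ENNReal.ofReal_add (by positivity) (by positivity)]
      apply ENNReal.ofReal_le_ofReal
      have hαmem : α ∈ Set.Icc α β := ⟨le_rfl, hab⟩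
      have hγmem : γ ∈ Set.Icc α β := ⟨hαγ.le, hγβ.le⟩
      have hβmem : β ∈ Set.Icc α β := ⟨hab, le_rfl⟩
      rcases hmono with hm | hm
      · have h1 : lineU a b k₀ Y α ≤ lineU a b k₀ Y γ := hm hαmem hγmem hαγ.le
        have h2 : lineU a b k₀ Y γ ≤ lineU a b k₀ Y β := hm hγmem hβmem hγβ.le
        rw [abs_of_nonneg (by linarith), abs_of_nonneg (by linarith),
          abs_of_nonneg (by linarith)]
        exact le_of_eq (by ring)
      · have h1 : lineU a b k₀ Y γ ≤ lineU a b k₀ Y α := hm hαmem hγmem hαγ.le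
        have h2 : lineU a b k₀ Y β ≤ lineU a b k₀ Y γ := hm hγmem hβmem hγβ.le
        rw [abs_of_nonpos (by linarith), abs_of_nonpos (by linarith),
          abs_of_nonpos (by linarith)]
        exact le_of_eq (by ring)

lemma concaveOn_affine (a b : ℝ) : ConcaveOn ℝ Set.univ fun s : ℝ => a * s + b := by
  refine ⟨convex_univ, fun x _ y _ p q hp hq hpq => ?_⟩
  simp only [smul_eq_mul]
  exact le_of_eq (by linear_combination b * hpq)

/-- The full one-dimensional slice bound. -/
lemma slice_core (a b : Fin (K + 1) → ℝ) (k₀ : Fin (K + 1)) {Y : ℝ} (hY : 0 < Y) :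
    ∫⁻ s in Set.Icc (0:ℝ) 1, ENNReal.ofReal (linePsi a b k₀ Y s)
      ≤ ENNReal.ofReal (2 / Y) := by
  obtain ⟨s₀, hs₀mem, hs₀max⟩ := isCompact_Icc.exists_isMaxOn
    (Set.nonempty_Icc.2 zero_le_one) (continuous_lineU a b k₀ Y).continuousOn
  have hmax : ∀ t ∈ Set.Icc (0:ℝ) 1, lineU a b k₀ Y t ≤ lineU a b k₀ Y s₀ :=
    fun t ht => hs₀max ht
  obtain ⟨hs₀0, hs₀1⟩ := hs₀mem
  -- convexity of the gap function
  set g : ℝ → ℝ := fun s => lineSup a b s - (a k₀ * s + b k₀) with hg_def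
  have hgconv : ConvexOn ℝ Set.univ g := by
    have h1 : ConvexOn ℝ Set.univ (lineSup a b) := by
      refine convexOn_finset_sup' Finset.univ_nonempty (fun k s => a k * s + b k)
        fun k => convexOn_affine (a k) (b k)
    exact h1.sub (concaveOn_affine (a k₀) (b k₀))
  have hu_exp : ∀ s, lineU a b k₀ Y s = Real.exp (-(Y * g s)) := by
    intro s
    rw [lineU, hg_def]
    congr 1
    ring
  have hg_le : ∀ t ∈ Set.Icc (0:ℝ) 1, g s₀ ≤ g t := by
    intro t ht
    have h := hmax t ht
    rw [hu_exp, hu_exp] at h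
    have h2 := Real.exp_le_exp.1 h
    nlinarith
  -- monotone on [0, s₀]
  have hmono1 : MonotoneOn (lineU a b k₀ Y) (Set.Icc 0 s₀) := by
    intro x hx y hy hxy
    rcases eq_or_lt_of_le hxy with rfl | hlt
    · exact le_rfl
    have hxs : x < s₀ := lt_of_lt_of_le hlt hy.2
    set lam := (y - x) / (s₀ - x) with hlam_def
    have hlam0 : 0 ≤ lam := div_nonneg (by linarith) (by linarith)
    have hlam1 : lam ≤ 1 := by
      rw [hlam_def, div_le_one (by linarith)]
      linarith [hy.2]
    have hne : s₀ - x ≠ 0 := ne_of_gt (by linarith)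
    have hcomb : (1 - lam) * x + lam * s₀ = y := by
      rw [hlam_def]; field_simp; ring
    have hconv := hgconv.2 (Set.mem_univ x) (Set.mem_univ s₀) (by linarith : (0:ℝ) ≤ 1 - lam)
      hlam0 (by ring)
    simp only [smul_eq_mul] at hconv
    rw [hcomb] at hconv
    have hgs₀ : g s₀ ≤ g x := hg_le x ⟨hx.1, hx.2.trans hs₀1⟩
    have hgy : g y ≤ g x := by nlinarith
    rw [hu_exp, hu_exp]
    apply Real.exp_le_exp.2
    nlinarith
  -- antitone on [s₀, 1]
  have hmono2 : AntitoneOn (lineU a b k₀ Y) (Set.Icc s₀ 1) := by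
    intro x hx y hy hxy
    rcases eq_or_lt_of_le hxy with rfl | hlt
    · exact le_rfl
    have hys : s₀ < y := lt_of_le_of_lt hx.1 hlt
    set lam := (x - s₀) / (y - s₀) with hlam_def
    have hlam0 : 0 ≤ lam := div_nonneg (by linarith [hx.1]) (by linarith)
    have hlam1 : lam ≤ 1 := by
      rw [hlam_def, div_le_one (by linarith)]
      linarith
    have hne : y - s₀ ≠ 0 := ne_of_gt (by linarith)
    have hcomb : (1 - lam) * s₀ + lam * y = x := by
      rw [hlam_def]; field_simp; ring
    have hconv := hgconv.2 (Set.mem_univ s₀) (Set.mem_univ y) (by linarith : (0:ℝ) ≤ 1 - lam)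
      hlam0 (by ring)
    simp only [smul_eq_mul] at hconv
    rw [hcomb] at hconv
    have hgs₀ : g s₀ ≤ g y := hg_le y ⟨le_trans hs₀0 (le_trans hx.1 hxy), hy.2⟩
    have hgx : g x ≤ g y := by nlinarith
    rw [hu_exp, hu_exp]
    apply Real.exp_le_exp.2
    nlinarith
  -- split the integral
  have hsub : Set.Icc (0:ℝ) 1 ⊆ ({0} : Set ℝ) ∪ (Set.Ioc 0 s₀ ∪ Set.Ioc s₀ 1) := by
    intro t ht
    obtain ⟨ht0, ht1⟩ := ht
    rcases eq_or_lt_of_le ht0 with rfl | htpos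
    · exact Or.inl rfl
    by_cases hts : t ≤ s₀
    · exact Or.inr (Or.inl ⟨htpos, hts⟩)
    · exact Or.inr (Or.inr ⟨lt_of_not_ge hts, ht1⟩)
  have hstep1 : ∫⁻ s in Set.Icc (0:ℝ) 1, ENNReal.ofReal (linePsi a b k₀ Y s)
      ≤ ∫⁻ s in ({0} : Set ℝ) ∪ (Set.Ioc 0 s₀ ∪ Set.Ioc s₀ 1),
          ENNReal.ofReal (linePsi a b k₀ Y s) :=
    lintegral_mono' (Measure.restrict_mono hsub le_rfl) le_rfl
  have hstep2 : ∫⁻ s in ({0} : Set ℝ) ∪ (Set.Ioc 0 s₀ ∪ Set.Ioc s₀ 1),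
        ENNReal.ofReal (linePsi a b k₀ Y s)
      ≤ (∫⁻ s in ({0} : Set ℝ), ENNReal.ofReal (linePsi a b k₀ Y s))
        + ((∫⁻ s in Set.Ioc 0 s₀, ENNReal.ofReal (linePsi a b k₀ Y s))
          + ∫⁻ s in Set.Ioc s₀ 1, ENNReal.ofReal (linePsi a b k₀ Y s)) :=
    le_trans (lintegral_union_le _ _ _) (by gcongr; exact lintegral_union_le _ _ _)
  have hzero : ∫⁻ s in ({0} : Set ℝ), ENNReal.ofReal (linePsi a b k₀ Y s) = 0 :=
    setLIntegral_measure_zero _ _ (measure_singleton 0)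
  have hp1 := slice_piece hY (((crossPts a b).filter fun t => t ∈ Set.Ioo (0:ℝ) s₀).card)
    0 s₀ hs₀0 le_rfl (Or.inl hmono1)
  have hp2 := slice_piece hY (((crossPts a b).filter fun t => t ∈ Set.Ioo s₀ (1:ℝ)).card)
    s₀ 1 hs₀1 le_rfl (Or.inr hmono2)
  refine le_trans hstep1 (le_trans hstep2 ?_)
  rw [hzero, zero_add]
  refine le_trans (add_le_add hp1 hp2) ?_
  rw [← ENNReal.ofReal_add (by positivity) (by positivity)]
  apply ENNReal.ofReal_le_ofReal
  have hu0 : 0 < lineU a b k₀ Y 0 := lineU_pos a b k₀ Y 0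
  have hu1 : 0 < lineU a b k₀ Y 1 := lineU_pos a b k₀ Y 1
  have hus₀ : lineU a b k₀ Y s₀ ≤ 1 := lineU_le_one a b k₀ hY.le s₀
  have h1 : |lineU a b k₀ Y s₀ - lineU a b k₀ Y 0| ≤ 1 := by
    rw [abs_le]
    constructor
    · have := lineU_le_one a b k₀ hY.le 0
      linarith [lineU_pos a b k₀ Y s₀]
    · linarith
  have h2 : |lineU a b k₀ Y 1 - lineU a b k₀ Y s₀| ≤ 1 := by
    rw [abs_le]
    constructor
    · linarith [lineU_pos a b k₀ Y 1]
    · have := lineU_le_one a b k₀ hY.le 1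
      linarith [lineU_pos a b k₀ Y s₀]
  rw [← add_div]
  gcongr
  linarith

end Slice2
open scoped ENNReal

/-! ### Fubini plumbing for the slice bound -/

section Fubini

open scoped Classical

/-- Indicator of the unit interval with values in `ℝ≥0∞`. -/
noncomputable def indE (t : ℝ) : ℝ≥0∞ := (Set.Icc (0:ℝ) 1).indicator (fun _ => 1) t

lemma indE_le_one (t : ℝ) : indE t ≤ 1 := by
  by_cases ht : t ∈ Set.Icc (0:ℝ) 1
  · rw [indE, Set.indicator_of_mem ht]
  · rw [indE, Set.indicator_of_notMem ht]
    exact zero_le_one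

lemma measurable_indE : Measurable indE := measurable_const.indicator measurableSet_Icc

lemma lintegral_indE : ∫⁻ t, indE t = 1 := by
  simp only [indE]
  rw [lintegral_indicator measurableSet_Icc]
  simp [Real.volume_Icc]

lemma indE_of_mem {t : ℝ} (ht : t ∈ Set.Icc (0:ℝ) 1) : indE t = 1 := by
  rw [indE, Set.indicator_of_mem ht]

/-- Bounding an `lmarginal` of a product of per-coordinate factors. -/
lemma lmarginal_prod_le {ι : Type*} [Fintype ι] [DecidableEq ι] {κ : Type*} [MeasurableSpace κ]
    {μ0 : Measure κ} [SigmaFinite μ0] {h : κ → ℝ≥0∞} (hh1 : ∀ t, h t ≤ 1) (hhm : Measurable h)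
    (hint : ∫⁻ t, h t ∂μ0 ≤ 1) (s : Finset ι) :
    ∀ (C : ℝ≥0∞), C ≠ ⊤ → ∀ (x : ι → κ),
      (∫⋯∫⁻_s, (fun y => C * ∏ c ∈ s, h (y c)) ∂(fun _ => μ0)) x ≤ C := by
  induction s using Finset.induction_on with
  | empty => intro C hC x; simp
  | @insert i s hi ih =>
      intro C hC x
      have hmeas : Measurable fun y : ι → κ => C * ∏ c ∈ insert i s, h (y c) :=
        (Finset.measurable_prod _ fun c _ => hhm.comp (measurable_pi_apply c)).const_mul C
      rw [MeasureTheory.lmarginal_insert _ hmeas hi]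
      have hkey : ∀ t : κ, (∫⋯∫⁻_s, (fun y => C * ∏ c ∈ insert i s, h (y c)) ∂(fun _ => μ0))
          (Function.update x i t) ≤ C * h t := by
        intro t
        have heq : (∫⋯∫⁻_s, (fun y => C * ∏ c ∈ insert i s, h (y c)) ∂(fun _ => μ0))
            (Function.update x i t)
            = (∫⋯∫⁻_s, (fun y => (C * h t) * ∏ c ∈ s, h (y c)) ∂(fun _ => μ0))
              (Function.update x i t) := by
          unfold MeasureTheory.lmarginal
          apply lintegral_congr
          intro y
          dsimp only
          rw [Finset.prod_insert hi]
          have hyi : Function.updateFinset (Function.update x i t) s y i = t := by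
            rw [Function.updateFinset]
            simp [hi]
          rw [hyi]
          ring
        rw [heq]
        exact ih (C * h t) (ENNReal.mul_ne_top hC
          (lt_of_le_of_lt (hh1 t) ENNReal.one_lt_top).ne) _
      calc ∫⁻ t, (∫⋯∫⁻_s, (fun y => C * ∏ c ∈ insert i s, h (y c)) ∂(fun _ => μ0))
            (Function.update x i t) ∂μ0
          ≤ ∫⁻ t, C * h t ∂μ0 := lintegral_mono hkey
        _ = C * ∫⁻ t, h t ∂μ0 := lintegral_const_mul' C h hC
        _ ≤ C * 1 := mul_le_mul_right hint C
        _ = C := mul_one C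

end Fubini
/-! ### Applying the slice bound through Fubini -/

section Apply

open scoped ENNReal

open scoped Classical in
variable {m n K : ℕ}

lemma bw_slice (M : Menu m n K) (i₀ : Fin m) (j₀ : Fin n) (x : Fin m → Fin n → ℝ)
    (z : Fin n → ℝ) (s : ℝ) (k : Fin (K + 1)) :
    bw M (Function.update x i₀ (Function.update z j₀ s)) k
      = (M k).1 i₀ j₀ * s + bw M (Function.update x i₀ (Function.update z j₀ 0)) k := by
  unfold bw
  have hsum : ∀ w : Fin n → ℝ, ∑ i, dotp (Function.update x i₀ w i) ((M k).1 i)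
      = dotp w ((M k).1 i₀) + ∑ i ∈ Finset.univ.erase i₀, dotp (x i) ((M k).1 i) := by
    intro w
    rw [← Finset.add_sum_erase _ (fun i => dotp (Function.update x i₀ w i) ((M k).1 i))
      (Finset.mem_univ i₀)]
    congr 1
    · rw [Function.update_self]
    · refine Finset.sum_congr rfl fun i hi => ?_
      rw [Function.update_of_ne (Finset.mem_erase.1 hi).1]
  rw [hsum, hsum]
  have hdotp : ∀ t : ℝ, dotp (Function.update z j₀ t) ((M k).1 i₀)
      = t * (M k).1 i₀ j₀ + ∑ j ∈ Finset.univ.erase j₀, z j * (M k).1 i₀ j := by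
    intro t
    unfold dotp
    rw [← Finset.add_sum_erase _ (fun j => Function.update z j₀ t j * (M k).1 i₀ j)
      (Finset.mem_univ j₀)]
    congr 1
    · rw [Function.update_self]
    · refine Finset.sum_congr rfl fun j hj => ?_
      rw [Function.update_of_ne (Finset.mem_erase.1 hj).1]
  rw [hdotp, hdotp]
  ring

lemma W_slice (M : Menu m n K) (i₀ : Fin m) (j₀ : Fin n) (x : Fin m → Fin n → ℝ)
    (z : Fin n → ℝ) (s : ℝ) :
    W M (Function.update x i₀ (Function.update z j₀ s))
      = lineSup (fun k => (M k).1 i₀ j₀)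
          (fun k => bw M (Function.update x i₀ (Function.update z j₀ 0)) k) s := by
  unfold W lineSup
  exact Finset.sup'_congr _ rfl fun k _ => bw_slice M i₀ j₀ x z s k

open scoped Classical in
lemma term_slice (M : Menu m n K) (Y : ℝ) (k₀ : Fin (K + 1)) (i₀ : Fin m) (j₀ : Fin n)
    (x : Fin m → Fin n → ℝ) (z : Fin n → ℝ) (s : ℝ) :
    term M Y k₀ i₀ j₀ (Function.update x i₀ (Function.update z j₀ s))
      = linePsi (fun k => (M k).1 i₀ j₀)
          (fun k => bw M (Function.update x i₀ (Function.update z j₀ 0)) k) k₀ Y s := by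
  unfold term linePsi lineU
  refine Finset.sup'_congr _ rfl fun k' _ => ?_
  rw [W_slice M i₀ j₀ x z s, bw_slice M i₀ j₀ x z s k', bw_slice M i₀ j₀ x z s k₀]

open scoped Classical in
/-- The dominating function, with a built-in box indicator. -/
noncomputable def Phi (M : Menu m n K) (Y : ℝ) (k : Fin (K + 1)) (i : Fin m) (j : Fin n)
    (v : Fin m → Fin n → ℝ) : ℝ≥0∞ :=
  (∏ i', ∏ j', indE (v i' j')) * ENNReal.ofReal (term M Y k i j v)

open scoped Classical in
lemma measurable_Phi (M : Menu m n K) (Y : ℝ) (k i j) : Measurable (Phi M Y k i j) := by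
  unfold Phi
  refine Measurable.mul ?_ (measurable_term M Y k i j).ennreal_ofReal
  exact Finset.measurable_prod _ fun i' _ => Finset.measurable_prod _ fun j' _ =>
    measurable_indE.comp (measurable_coord i' j')

open scoped Classical in
lemma lintegral_Phi_le (M : Menu m n K) {Y : ℝ} (hY : 0 < Y) (k₀ : Fin (K + 1)) (i₀ : Fin m)
    (j₀ : Fin n) : ∫⁻ v, Phi M Y k₀ i₀ j₀ v ≤ ENNReal.ofReal (2 / Y) := by
  have hPhiMeas := measurable_Phi M Y k₀ i₀ j₀
  rw [volume_pi, lintegral_eq_lmarginal_univ (fun (_ : Fin m) (_ : Fin n) => (0:ℝ))]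
  have huniv : (Finset.univ : Finset (Fin m)) = (Finset.univ.erase i₀) ∪ {i₀} := by
    rw [Finset.union_comm, ← Finset.insert_eq, Finset.insert_erase (Finset.mem_univ i₀)]
  rw [huniv, MeasureTheory.lmarginal_union _ _ hPhiMeas
    (Finset.disjoint_singleton_right.2 (Finset.notMem_erase i₀ _))]
  -- the inner marginal over coordinate i₀
  have claim1 : ∀ xx : Fin m → Fin n → ℝ,
      (∫⋯∫⁻_{i₀}, Phi M Y k₀ i₀ j₀ ∂fun _ => (volume : Measure (Fin n → ℝ))) xx
        ≤ ENNReal.ofReal (2 / Y) * ∏ i ∈ Finset.univ.erase i₀, ∏ j', indE (xx i j') := by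
    intro xx
    rw [MeasureTheory.lmarginal_singleton]
    dsimp only
    have hsplit : ∀ w : Fin n → ℝ, Phi M Y k₀ i₀ j₀ (Function.update xx i₀ w)
        = (∏ i ∈ Finset.univ.erase i₀, ∏ j', indE (xx i j')) *
          ((∏ j', indE (w j')) *
            ENNReal.ofReal (term M Y k₀ i₀ j₀ (Function.update xx i₀ w))) := by
      intro w
      unfold Phi
      have hprod : (∏ i', ∏ j', indE (Function.update xx i₀ w i' j'))
          = (∏ j', indE (w j')) * ∏ i ∈ Finset.univ.erase i₀, ∏ j', indE (xx i j') := by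
        rw [← Finset.mul_prod_erase _ (fun i' => ∏ j', indE (Function.update xx i₀ w i' j'))
          (Finset.mem_univ i₀)]
        congr 1
        · rw [Function.update_self]
        · refine Finset.prod_congr rfl fun i hi => ?_
          rw [Function.update_of_ne (Finset.mem_erase.1 hi).1]
      rw [hprod]
      ring
    rw [lintegral_congr hsplit]
    have hPle : (∏ i ∈ Finset.univ.erase i₀, ∏ j', indE (xx i j')) ≤ 1 := by
      calc (∏ i ∈ Finset.univ.erase i₀, ∏ j', indE (xx i j'))
          ≤ ∏ _i ∈ Finset.univ.erase i₀, (1:ℝ≥0∞) := by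
            refine Finset.prod_le_prod' fun i _ => ?_
            calc (∏ j', indE (xx i j')) ≤ ∏ _j' : Fin n, (1:ℝ≥0∞) :=
                Finset.prod_le_prod' fun j' _ => indE_le_one _
              _ = 1 := Finset.prod_const_one
        _ = 1 := Finset.prod_const_one
    have hPne : (∏ i ∈ Finset.univ.erase i₀, ∏ j', indE (xx i j')) ≠ ⊤ :=
      (lt_of_le_of_lt hPle ENNReal.one_lt_top).ne
    rw [lintegral_const_mul' _ _ hPne]
    have hinner : ∫⁻ w : Fin n → ℝ, (∏ j', indE (w j')) *
        ENNReal.ofReal (term M Y k₀ i₀ j₀ (Function.update xx i₀ w))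
        ≤ ENNReal.ofReal (2 / Y) := by
      have hGmeas : Measurable fun w : Fin n → ℝ => (∏ j', indE (w j')) *
          ENNReal.ofReal (term M Y k₀ i₀ j₀ (Function.update xx i₀ w)) := by
        refine Measurable.mul ?_ ?_
        · exact Finset.measurable_prod _ fun j' _ =>
            measurable_indE.comp (measurable_pi_apply j')
        · exact ((measurable_term M Y k₀ i₀ j₀).comp (measurable_update xx)).ennreal_ofReal
      rw [volume_pi, lintegral_eq_lmarginal_univ (fun (_ : Fin n) => (0:ℝ))]
      have hunivn : (Finset.univ : Finset (Fin n)) = (Finset.univ.erase j₀) ∪ {j₀} := by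
        rw [Finset.union_comm, ← Finset.insert_eq, Finset.insert_erase (Finset.mem_univ j₀)]
      have hswap := MeasureTheory.lmarginal_union (s := Finset.univ.erase j₀) (t := {j₀})
        (fun _ => (volume : Measure ℝ))
        (fun w : Fin n → ℝ => (∏ j', indE (w j')) *
          ENNReal.ofReal (term M Y k₀ i₀ j₀ (Function.update xx i₀ w))) hGmeas
        (Finset.disjoint_singleton_right.2 (Finset.notMem_erase j₀ _))
      rw [← hunivn] at hswap
      rw [hswap]
      have claim1a : ∀ zz : Fin n → ℝ,
          (∫⋯∫⁻_{j₀}, (fun w => (∏ j', indE (w j')) *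
            ENNReal.ofReal (term M Y k₀ i₀ j₀ (Function.update xx i₀ w)))
              ∂fun _ => (volume : Measure ℝ)) zz
          ≤ ENNReal.ofReal (2 / Y) * ∏ j ∈ Finset.univ.erase j₀, indE (zz j) := by
        intro zz
        rw [MeasureTheory.lmarginal_singleton]
        dsimp only
        have hsplit2 : ∀ s : ℝ, (∏ j', indE (Function.update zz j₀ s j')) *
            ENNReal.ofReal (term M Y k₀ i₀ j₀
              (Function.update xx i₀ (Function.update zz j₀ s)))
            = (∏ j ∈ Finset.univ.erase j₀, indE (zz j)) *
              (indE s * ENNReal.ofReal (term M Y k₀ i₀ j₀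
                (Function.update xx i₀ (Function.update zz j₀ s)))) := by
          intro s
          have hprod : (∏ j', indE (Function.update zz j₀ s j'))
              = indE s * ∏ j ∈ Finset.univ.erase j₀, indE (zz j) := by
            rw [← Finset.mul_prod_erase _ (fun j' => indE (Function.update zz j₀ s j'))
              (Finset.mem_univ j₀)]
            congr 1
            · rw [Function.update_self]
            · refine Finset.prod_congr rfl fun j hj => ?_
              rw [Function.update_of_ne (Finset.mem_erase.1 hj).1]
          rw [hprod]
          ring
        rw [lintegral_congr hsplit2]
        have hQle : (∏ j ∈ Finset.univ.erase j₀, indE (zz j)) ≤ 1 := by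
          calc (∏ j ∈ Finset.univ.erase j₀, indE (zz j))
              ≤ ∏ _j ∈ Finset.univ.erase j₀, (1:ℝ≥0∞) :=
                Finset.prod_le_prod' fun j _ => indE_le_one _
            _ = 1 := Finset.prod_const_one
        have hQne : (∏ j ∈ Finset.univ.erase j₀, indE (zz j)) ≠ ⊤ :=
          (lt_of_le_of_lt hQle ENNReal.one_lt_top).ne
        rw [lintegral_const_mul' _ _ hQne]
        have hcore : ∫⁻ s : ℝ, indE s * ENNReal.ofReal (term M Y k₀ i₀ j₀
            (Function.update xx i₀ (Function.update zz j₀ s)))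
            ≤ ENNReal.ofReal (2 / Y) := by
          have hind : ∀ s : ℝ, indE s * ENNReal.ofReal (term M Y k₀ i₀ j₀
              (Function.update xx i₀ (Function.update zz j₀ s)))
              = (Set.Icc (0:ℝ) 1).indicator (fun s => ENNReal.ofReal (term M Y k₀ i₀ j₀
                (Function.update xx i₀ (Function.update zz j₀ s)))) s := by
            intro s
            by_cases hs : s ∈ Set.Icc (0:ℝ) 1
            · rw [indE_of_mem hs, one_mul, Set.indicator_of_mem hs]
            · rw [Set.indicator_of_notMem hs, indE, Set.indicator_of_notMem hs, zero_mul]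
          rw [lintegral_congr hind, lintegral_indicator measurableSet_Icc]
          have hterm : ∀ s : ℝ, term M Y k₀ i₀ j₀
              (Function.update xx i₀ (Function.update zz j₀ s))
              = linePsi (fun k => (M k).1 i₀ j₀)
                  (fun k => bw M (Function.update xx i₀ (Function.update zz j₀ 0)) k) k₀ Y s :=
            fun s => term_slice M Y k₀ i₀ j₀ xx zz s
          rw [setLIntegral_congr_fun measurableSet_Icc
            (fun s _ => by rw [hterm s])]
          exact slice_core _ _ k₀ hY
        calc (∏ j ∈ Finset.univ.erase j₀, indE (zz j)) *
              ∫⁻ s : ℝ, indE s * ENNReal.ofReal (term M Y k₀ i₀ j₀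
                (Function.update xx i₀ (Function.update zz j₀ s)))
            ≤ (∏ j ∈ Finset.univ.erase j₀, indE (zz j)) * ENNReal.ofReal (2 / Y) :=
              mul_le_mul_right hcore _
          _ = ENNReal.ofReal (2 / Y) * ∏ j ∈ Finset.univ.erase j₀, indE (zz j) :=
              mul_comm _ _
      refine le_trans (MeasureTheory.lmarginal_mono claim1a _) ?_
      exact lmarginal_prod_le indE_le_one measurable_indE (le_of_eq lintegral_indE)
        (Finset.univ.erase j₀) (ENNReal.ofReal (2 / Y)) ENNReal.ofReal_ne_top _
    calc (∏ i ∈ Finset.univ.erase i₀, ∏ j', indE (xx i j')) *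
          ∫⁻ w : Fin n → ℝ, (∏ j', indE (w j')) *
            ENNReal.ofReal (term M Y k₀ i₀ j₀ (Function.update xx i₀ w))
        ≤ (∏ i ∈ Finset.univ.erase i₀, ∏ j', indE (xx i j')) * ENNReal.ofReal (2 / Y) :=
          mul_le_mul_right hinner _
      _ = ENNReal.ofReal (2 / Y) * ∏ i ∈ Finset.univ.erase i₀, ∏ j', indE (xx i j') :=
          mul_comm _ _
  refine le_trans (MeasureTheory.lmarginal_mono claim1 _) ?_
  have hIndE1 : ∀ xi : Fin n → ℝ, (∏ j', indE (xi j')) ≤ 1 := fun xi => by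
    calc (∏ j', indE (xi j')) ≤ ∏ _j' : Fin n, (1:ℝ≥0∞) :=
        Finset.prod_le_prod' fun j' _ => indE_le_one _
      _ = 1 := Finset.prod_const_one
  have hIndEmeas : Measurable fun xi : Fin n → ℝ => ∏ j', indE (xi j') :=
    Finset.measurable_prod _ fun j' _ => measurable_indE.comp (measurable_pi_apply j')
  have hIndEint : ∫⁻ xi : Fin n → ℝ, (∏ j', indE (xi j')) ≤ 1 := by
    have hbox : ∀ xi : Fin n → ℝ, (∏ j', indE (xi j'))
        = (Set.univ.pi fun _ : Fin n => Set.Icc (0:ℝ) 1).indicator (fun _ => 1) xi := by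
      intro xi
      by_cases hxi : ∀ j, xi j ∈ Set.Icc (0:ℝ) 1
      · rw [Set.indicator_of_mem (Set.mem_univ_pi.2 hxi)]
        exact Finset.prod_eq_one fun j _ => indE_of_mem (hxi j)
      · push_neg at hxi
        obtain ⟨j1, hj1⟩ := hxi
        rw [Set.indicator_of_notMem (by rw [Set.mem_univ_pi]; push_neg; exact ⟨j1, hj1⟩)]
        exact Finset.prod_eq_zero (Finset.mem_univ j1)
          (by rw [indE, Set.indicator_of_notMem hj1])
    rw [lintegral_congr hbox, lintegral_indicator (MeasurableSet.univ_pi fun _ =>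
      measurableSet_Icc)]
    rw [setLIntegral_one, volume_pi, Measure.pi_pi]
    simp [Real.volume_Icc]
  exact lmarginal_prod_le hIndE1 hIndEmeas hIndEint (Finset.univ.erase i₀)
    (ENNReal.ofReal (2 / Y)) ENNReal.ofReal_ne_top _

end Apply
/-! ### Auxiliary results for the main theorem -/

section Main

open scoped ENNReal

variable {m n K : ℕ}

lemma sup'_fin_one (c : Fin 1 → ℝ) : Finset.univ.sup' Finset.univ_nonempty c = c 0 :=
  le_antisymm (Finset.sup'_le _ _ fun k _ => by rw [Subsingleton.elim k 0])
    (Finset.le_sup' c (Finset.mem_univ 0))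

lemma intg_eq_pay_K0 (M : Menu m n 0) (Y : ℝ) (v : Fin m → Fin n → ℝ) :
    intg M Y v = pay M v := by
  have h := err_eq M Y v
  have hA : Aterm M Y v = 0 := by
    unfold Aterm
    refine Finset.sum_eq_zero fun i _ => Finset.sum_eq_zero fun k _ => ?_
    have hk : k = 0 := Fin.eq_zero k
    have hWWo : WWo M v i = bwWo M v i k := by
      rw [hk]
      exact sup'_fin_one (bwWo M v i)
    rw [hWWo]
    ring
  have hT : Tterm M Y v = 0 := by
    unfold Tterm
    refine Finset.sum_eq_zero fun k _ => ?_
    have hk : k = 0 := Fin.eq_zero k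
    have hW : W M v = bw M v k := by
      rw [hk]
      exact sup'_fin_one (bw M v)
    rw [hW]
    ring
  have hS : Sterm M Y v = 0 := by
    unfold Sterm
    have hk : kstar M v = 0 := Fin.eq_zero _
    rw [hk, Fin.sum_univ_one]
    have hsum : (∑ k' : Fin 1, Real.exp (Y * bw M v k')) = Real.exp (Y * bw M v 0) :=
      Fin.sum_univ_one _
    rw [hsum, div_self (Real.exp_pos _).ne', mul_one, sub_self]
  rw [hA, hT, hS] at h
  linarith

lemma ae_mem_VP (F : Measure (Fin m → Fin n → ℝ)) [IsProbabilityMeasure F]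
    (hFV : F (VP m n) = 1) : ∀ᵐ v ∂F, v ∈ VP m n := by
  have hc : F (VP m n)ᶜ = 0 := by
    have h1 : F (VP m n)ᶜ = F Set.univ - F (VP m n) :=
      measure_compl measurableSet_VP (measure_ne_top F _)
    rw [h1, hFV, measure_univ, tsub_self]
  rw [ae_iff]
  simpa [Set.compl_def] using hc

end Main
section Numeric

set_option maxHeartbeats 1000000 in
lemma two_mul_div_le {X Y : ℝ} (hX : 0 < X) (hYX : X ≤ Y) (hcase : Y ≤ Real.exp 1 * X) :
    2 * (Y / X) ≤ Real.exp 1 * (1 + Real.log (Y / X)) := by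
  have hE : (0:ℝ) < Real.exp 1 := Real.exp_pos 1
  have hr1 : (1:ℝ) ≤ Y / X := (one_le_div hX).2 hYX
  have hre : Y / X ≤ Real.exp 1 := (div_le_iff₀ hX).2 hcase
  have he2 : (2:ℝ) ≤ Real.exp 1 := by linarith [Real.add_one_le_exp 1]
  have hne : Real.exp 1 - 1 ≠ 0 := ne_of_gt (by linarith)
  obtain ⟨lam, hlam_def⟩ : ∃ l : ℝ, l = (Y / X - 1) / (Real.exp 1 - 1) := ⟨_, rfl⟩
  have hlam0 : 0 ≤ lam := hlam_def ▸ div_nonneg (by linarith) (by linarith)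
  have hlam1 : lam ≤ 1 := by
    rw [hlam_def, div_le_one (by linarith)]
    linarith
  have hlam : lam * (Real.exp 1 - 1) = Y / X - 1 := by
    rw [hlam_def]
    field_simp
  have hlog : lam ≤ Real.log (Y / X) := by
    have hcc := strictConcaveOn_log_Ioi.concaveOn.2 (Set.mem_Ioi.2 one_pos)
      (Set.mem_Ioi.2 (Real.exp_pos 1)) (by linarith : (0:ℝ) ≤ 1 - lam) hlam0 (by ring)
    simp only [smul_eq_mul, Real.log_one, Real.log_exp, mul_zero, mul_one, zero_add] at hcc
    have hcomb : (1 - lam) * 1 + lam * Real.exp 1 = Y / X := by nlinarith [hlam]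
    rw [mul_one] at hcomb
    rw [hcomb] at hcc
    linarith
  have h5 : 2 * (Y / X) ≤ Real.exp 1 * (1 + lam) := by
    nlinarith [hlam, mul_nonneg (sub_nonneg.2 hre) (sub_nonneg.2 he2)]
  nlinarith [h5, hlog, hE]

set_option maxHeartbeats 1000000 in
lemma caseA_numeric {X Y : ℝ} (hX : 0 < X) (hYX : X ≤ Y) (hY0 : 0 < Y)
    (hcase : Y ≤ Real.exp 1 * X) {mr Kr nr : ℝ} (hm1 : 1 ≤ mr) (hK12 : 2 ≤ Kr + 1)
    (hn0 : 0 ≤ nr) (hlogS : 0 ≤ 1 + Real.log (Y / X)) :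
    nr ≤ (nr * mr * X * (Kr + 1) / Y) * (1 + Real.log (Y / X)) := by
  have hE : (0:ℝ) < Real.exp 1 := Real.exp_pos 1
  have key3 := two_mul_div_le hX hYX hcase
  have hXe : 2 * Y ≤ Real.exp 1 * (X * (1 + Real.log (Y / X))) := by
    have hrX : Y / X * X = Y := div_mul_cancel₀ Y hX.ne'
    nlinarith [mul_le_mul_of_nonneg_right key3 hX.le]
  have hL : (0:ℝ) ≤ X * (1 + Real.log (Y / X)) := mul_nonneg hX.le hlogS
  have hm2 : (2:ℝ) ≤ mr * (Kr + 1) := by nlinarith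
  have p1 : 2 * (X * (1 + Real.log (Y / X)))
      ≤ mr * (Kr + 1) * (X * (1 + Real.log (Y / X))) :=
    mul_le_mul_of_nonneg_right hm2 hL
  have he4 : Real.exp 1 ≤ 4 := by nlinarith [Real.exp_one_lt_d9]
  have q1 : Real.exp 1 * (2 * (X * (1 + Real.log (Y / X))))
      ≤ Real.exp 1 * (mr * (Kr + 1) * (X * (1 + Real.log (Y / X)))) :=
    mul_le_mul_of_nonneg_left p1 hE.le
  have q2 : 4 * Y ≤ Real.exp 1 * (2 * (X * (1 + Real.log (Y / X)))) := by
    nlinarith [hXe]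
  have q3 : Real.exp 1 * Y ≤ 4 * Y := by nlinarith [he4, hY0]
  have hYle : Y ≤ mr * (Kr + 1) * (X * (1 + Real.log (Y / X))) := by
    have h8 : Real.exp 1 * Y ≤ Real.exp 1 * (mr * (Kr + 1) * (X * (1 + Real.log (Y / X)))) := by
      linarith
    exact (mul_le_mul_iff_right₀ hE).1 h8
  have h7 : 1 ≤ mr * (Kr + 1) * (X * (1 + Real.log (Y / X))) / Y := (one_le_div hY0).2 hYle
  calc nr = nr * 1 := (mul_one _).symm
    _ ≤ nr * (mr * (Kr + 1) * (X * (1 + Real.log (Y / X))) / Y) :=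
      mul_le_mul_of_nonneg_left h7 hn0
    _ = (nr * mr * X * (Kr + 1) / Y) * (1 + Real.log (Y / X)) := by ring

end Numeric
/-- If the valuation-profile distribution `F` has a density `f ≤ X`
(w.r.t. Lebesgue measure) and `Y ≥ max {1, X}`, then the softmax revenue of any AMA
menu differs from the (argmax) revenue by at most
`m (K+1) / (e Y) + (n m X (K+1) / Y) (1 + log (Y/X))`. -/
theorem statement19 {m n K : ℕ} (hm : 0 < m) (X Y : ℝ) (hX : 0 < X) (hY : max 1 X ≤ Y)
    (f : (Fin m → Fin n → ℝ) → ℝ) (hf0 : ∀ v, 0 ≤ f v) (hfX : ∀ v, f v ≤ X)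
    (F : Measure (Fin m → Fin n → ℝ)) [IsProbabilityMeasure F]
    (hF : F = volume.withDensity fun v => ENNReal.ofReal (f v))
    (hFV : F (VP m n) = 1)
    (M : Menu m n K) (hM : IsMenu M) :
    |RevSoftmax F Y M - Rev F M| ≤
      (m : ℝ) * (K + 1) / (Real.exp 1 * Y) +
        ((n : ℝ) * (m : ℝ) * X * (K + 1) / Y) * (1 + Real.log (Y / X)) := by
  classical
  have hY1 : (1:ℝ) ≤ Y := le_trans (le_max_left _ _) hY
  have hYX : X ≤ Y := le_trans (le_max_right _ _) hY
  have hY0 : (0:ℝ) < Y := lt_of_lt_of_le one_pos hY1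
  have hE : (0:ℝ) < Real.exp 1 := Real.exp_pos 1
  have hlog0 : 0 ≤ Real.log (Y / X) := Real.log_nonneg ((one_le_div hX).2 hYX)
  have hlogS : (0:ℝ) ≤ 1 + Real.log (Y / X) := by linarith
  rcases Nat.eq_zero_or_pos K with hK0 | hKpos
  · subst hK0
    have heq : RevSoftmax F Y M = Rev F M := by
      rw [revSoftmax_eq, Rev]
      exact integral_congr_ae (Filter.Eventually.of_forall fun v => intg_eq_pay_K0 M Y v)
    rw [heq, sub_self, abs_zero]
    have h1 : (0:ℝ) ≤ (m : ℝ) * (0 + 1) / (Real.exp 1 * Y) := by positivity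
    have h2 : (0:ℝ) ≤ ((n : ℝ) * (m : ℝ) * X * (0 + 1) / Y) * (1 + Real.log (Y / X)) :=
      mul_nonneg (by positivity) hlogS
    push_cast
    push_cast at h1 h2
    linarith
  -- now K ≥ 1
  have hK12 : (2:ℝ) ≤ (K:ℝ) + 1 := by
    have : (1:ℝ) ≤ (K:ℝ) := by exact_mod_cast hKpos
    linarith
  have hm1 : (1:ℝ) ≤ (m:ℝ) := by exact_mod_cast hm
  have hae := ae_mem_VP F hFV
  have hint1 : Integrable (intg M Y) F := by
    refine Integrable.mono' (integrable_const (2 * (m:ℝ) * CC M))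
      (measurable_intg M Y).aestronglyMeasurable ?_
    filter_upwards [hae] with v hv
    rw [Real.norm_eq_abs]
    exact intg_abs_le hM Y hv
  have hint2 : Integrable (pay M) F := by
    refine Integrable.mono' (integrable_const ((2 * (m:ℝ) + 2) * CC M))
      (measurable_pay M).aestronglyMeasurable ?_
    filter_upwards [hae] with v hv
    rw [Real.norm_eq_abs]
    exact pay_abs_le hM hm hv
  have herr : RevSoftmax F Y M - Rev F M = ∫ v, (intg M Y v - pay M v) ∂F := by
    rw [revSoftmax_eq, Rev, integral_sub hint1 hint2]
  rcases le_total Y (Real.exp 1 * X) with hcase | hcase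
  · -- Case A : Y ≤ e X, use the pointwise bound |S| ≤ n
    have habs : |RevSoftmax F Y M - Rev F M|
        ≤ ((m:ℝ) * K / (Real.exp 1 * Y) + n) * (F Set.univ).toReal := by
      rw [herr, ← Real.norm_eq_abs]
      refine norm_integral_le_of_norm_le_const ?_
      filter_upwards [hae] with v hv
      rw [Real.norm_eq_abs]
      have h1 := err_abs_le M hY0 hm v
      have h2 := Sterm_abs_le_n hM Y hv
      linarith
    rw [measure_univ] at habs
    simp only [ENNReal.toReal_one, mul_one] at habs
    refine le_trans habs ?_
    have h6 : (n:ℝ) ≤ ((n:ℝ) * m * X * ((K:ℝ) + 1) / Y) * (1 + Real.log (Y / X)) :=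
      caseA_numeric hX hYX hY0 hcase hm1 hK12 (by positivity) hlogS
    have hA : (m:ℝ) * K / (Real.exp 1 * Y) ≤ (m:ℝ) * ((K:ℝ) + 1) / (Real.exp 1 * Y) :=
      (div_le_div_iff_of_pos_right (by positivity)).2 (by nlinarith)
    linarith
  · -- Case B : e X ≤ Y, use the slice bound
    have hlog1 : 1 ≤ Real.log (Y / X) := by
      rw [Real.le_log_iff_exp_le (by positivity)]
      rw [le_div_iff₀ hX]
      exact hcase
    have habs2 : |RevSoftmax F Y M - Rev F M| ≤ ∫ v, |intg M Y v - pay M v| ∂F := by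
      rw [herr, ← Real.norm_eq_abs]
      refine le_trans (norm_integral_le_integral_norm _) (le_of_eq ?_)
      simp [Real.norm_eq_abs]
    have hmeas_err : Measurable fun v => intg M Y v - pay M v :=
      (measurable_intg M Y).sub (measurable_pay M)
    have heq2 : ∫ v, |intg M Y v - pay M v| ∂F
        = (∫⁻ v, ENNReal.ofReal |intg M Y v - pay M v| ∂F).toReal :=
      integral_eq_lintegral_of_nonneg_ae (Filter.Eventually.of_forall fun v => abs_nonneg _)
        hmeas_err.abs.aestronglyMeasurable
    have hFle : F ≤ (ENNReal.ofReal X) • (volume : Measure (Fin m → Fin n → ℝ)) := by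
      rw [hF]
      refine Measure.le_iff.2 fun s hs => ?_
      rw [withDensity_apply _ hs]
      calc ∫⁻ v in s, ENNReal.ofReal (f v) ∂volume
          ≤ ∫⁻ _v in s, ENNReal.ofReal X ∂volume :=
            lintegral_mono fun v => ENNReal.ofReal_le_ofReal (hfX v)
        _ = ENNReal.ofReal X * volume s := setLIntegral_const s _
        _ = ((ENNReal.ofReal X) • volume) s := by rw [Measure.smul_apply, smul_eq_mul]
    have hPhiF : ∀ k i j, ∫⁻ v, Phi M Y k i j v ∂F
        ≤ ENNReal.ofReal X * ENNReal.ofReal (2 / Y) := by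
      intro k i j
      calc ∫⁻ v, Phi M Y k i j v ∂F
          ≤ ∫⁻ v, Phi M Y k i j v ∂((ENNReal.ofReal X) • volume) :=
            lintegral_mono' hFle le_rfl
        _ = ENNReal.ofReal X * ∫⁻ v, Phi M Y k i j v := lintegral_smul_measure _ _
        _ ≤ ENNReal.ofReal X * ENNReal.ofReal (2 / Y) :=
            mul_le_mul_right (lintegral_Phi_le M hY0 k i j) _
    have hc00 : (0:ℝ) ≤ (m:ℝ) * K / (Real.exp 1 * Y) := by positivity
    have hdom : ∀ᵐ v ∂F, ENNReal.ofReal |intg M Y v - pay M v|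
        ≤ ENNReal.ofReal ((m:ℝ) * K / (Real.exp 1 * Y)) + ∑ k, ∑ i, ∑ j, Phi M Y k i j v := by
      filter_upwards [hae] with v hv
      have h1 : |intg M Y v - pay M v|
          ≤ (m:ℝ) * K / (Real.exp 1 * Y) + ∑ k, ∑ i, ∑ j, term M Y k i j v := by
        have ha := err_abs_le M hY0 hm v
        have hb := Sterm_abs_le_term hM Y hv
        linarith
      have hsum_eq : ENNReal.ofReal (∑ k, ∑ i, ∑ j, term M Y k i j v)
          = ∑ k, ∑ i, ∑ j, ENNReal.ofReal (term M Y k i j v) := by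
        rw [ENNReal.ofReal_sum_of_nonneg (fun k _ => Finset.sum_nonneg fun i _ =>
          Finset.sum_nonneg fun j _ => term_nonneg M Y k i j v)]
        refine Finset.sum_congr rfl fun k _ => ?_
        rw [ENNReal.ofReal_sum_of_nonneg (fun i _ => Finset.sum_nonneg fun j _ =>
          term_nonneg M Y k i j v)]
        refine Finset.sum_congr rfl fun i _ => ?_
        exact ENNReal.ofReal_sum_of_nonneg fun j _ => term_nonneg M Y k i j v
      calc ENNReal.ofReal |intg M Y v - pay M v|
          ≤ ENNReal.ofReal ((m:ℝ) * K / (Real.exp 1 * Y) + ∑ k, ∑ i, ∑ j, term M Y k i j v) :=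
            ENNReal.ofReal_le_ofReal h1
        _ ≤ ENNReal.ofReal ((m:ℝ) * K / (Real.exp 1 * Y))
            + ENNReal.ofReal (∑ k, ∑ i, ∑ j, term M Y k i j v) := ENNReal.ofReal_add_le
        _ = ENNReal.ofReal ((m:ℝ) * K / (Real.exp 1 * Y))
            + ∑ k, ∑ i, ∑ j, ENNReal.ofReal (term M Y k i j v) := by rw [hsum_eq]
        _ ≤ ENNReal.ofReal ((m:ℝ) * K / (Real.exp 1 * Y))
            + ∑ k, ∑ i, ∑ j, Phi M Y k i j v := by
          gcongr with k hk i hi j hj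
          have hprod : (∏ i', ∏ j', indE (v i' j')) = 1 :=
            Finset.prod_eq_one fun i' _ => Finset.prod_eq_one fun j' _ =>
              indE_of_mem ⟨((hv i').1 j').1, ((hv i').1 j').2⟩
          rw [Phi, hprod, one_mul]
    have hlin : ∫⁻ v, ENNReal.ofReal |intg M Y v - pay M v| ∂F
        ≤ ENNReal.ofReal ((m:ℝ) * K / (Real.exp 1 * Y)
            + (((K:ℝ) + 1) * m * n) * (X * (2 / Y))) := by
      calc ∫⁻ v, ENNReal.ofReal |intg M Y v - pay M v| ∂F
          ≤ ∫⁻ v, (ENNReal.ofReal ((m:ℝ) * K / (Real.exp 1 * Y))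
              + ∑ k, ∑ i, ∑ j, Phi M Y k i j v) ∂F := lintegral_mono_ae hdom
        _ = ENNReal.ofReal ((m:ℝ) * K / (Real.exp 1 * Y)) * F Set.univ
            + ∑ k, ∑ i, ∑ j, ∫⁻ v, Phi M Y k i j v ∂F := by
            rw [lintegral_add_left measurable_const, lintegral_const]
            congr 1
            rw [lintegral_finset_sum _ (fun k _ => Finset.measurable_sum _ fun i _ =>
              Finset.measurable_sum _ fun j _ => measurable_Phi M Y k i j)]
            refine Finset.sum_congr rfl fun k _ => ?_
            rw [lintegral_finset_sum _ (fun i _ => Finset.measurable_sum _ fun j _ =>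
              measurable_Phi M Y k i j)]
            refine Finset.sum_congr rfl fun i _ => ?_
            exact lintegral_finset_sum _ fun j _ => measurable_Phi M Y k i j
        _ ≤ ENNReal.ofReal ((m:ℝ) * K / (Real.exp 1 * Y)) * 1
            + ∑ _k : Fin (K+1), ∑ _i : Fin m, ∑ _j : Fin n,
                (ENNReal.ofReal X * ENNReal.ofReal (2 / Y)) := by
            gcongr with k hk i hi j hj
            · exact le_of_eq measure_univ
            · exact hPhiF k i j
        _ = ENNReal.ofReal ((m:ℝ) * K / (Real.exp 1 * Y))
            + (((K + 1) * m * n : ℕ) : ℝ≥0∞) * ENNReal.ofReal (X * (2 / Y)) := by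
            rw [mul_one, ← ENNReal.ofReal_mul hX.le]
            congr 1
            simp only [Finset.sum_const, Finset.card_univ, Fintype.card_fin, smul_smul]
            rw [nsmul_eq_mul]
            congr 1
            push_cast
            ring
        _ = ENNReal.ofReal ((m:ℝ) * K / (Real.exp 1 * Y)
              + (((K:ℝ) + 1) * m * n) * (X * (2 / Y))) := by
            rw [ENNReal.ofReal_add hc00 (by positivity), ← ENNReal.ofReal_natCast,
              ← ENNReal.ofReal_mul (by positivity)]
            congr 2
            push_cast
            ring
    have habs3 : |RevSoftmax F Y M - Rev F M|
        ≤ (m:ℝ) * K / (Real.exp 1 * Y) + (((K:ℝ) + 1) * m * n) * (X * (2 / Y)) := by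
      refine le_trans habs2 ?_
      rw [heq2]
      refine le_trans (ENNReal.toReal_mono ENNReal.ofReal_ne_top hlin) ?_
      rw [ENNReal.toReal_ofReal (by positivity)]
    refine le_trans habs3 ?_
    have hA : (m:ℝ) * K / (Real.exp 1 * Y) ≤ (m:ℝ) * ((K:ℝ) + 1) / (Real.exp 1 * Y) :=
      (div_le_div_iff_of_pos_right (by positivity)).2 (by nlinarith)
    have hB : (((K:ℝ) + 1) * m * n) * (X * (2 / Y))
        ≤ ((n:ℝ) * m * X * ((K:ℝ) + 1) / Y) * (1 + Real.log (Y / X)) := by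
      have h2 : (((K:ℝ) + 1) * m * n) * (X * (2 / Y)) = ((n:ℝ) * m * X * ((K:ℝ)+1) / Y) * 2 := by
        ring
      rw [h2]
      exact mul_le_mul_of_nonneg_left (by linarith) (by positivity)
    linarith

end AMA
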